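/- arXiv:1804.00468 — 6 statements merged into one kernel-verified Lean document; each statement's English description precedes it below -/
import Mathlib

section
/- Let 1 < p < ∞ and let f be a non-negative measurable function on (0,∞). Define H(f)(x) = (1/x)∫₀ˣ f(t) dt. Then ‖H(f)‖_{L^p(0,∞)} ≤ (p/(p-1)) ‖f‖_{L^p(0,∞)}, and the constant p/(p-1) is sharp (i.e., it equals the operator norm of H on L^p(0,∞)). -/
open MeasureTheory Set Filter
open scoped ENNReal Topology

/-- The classical one-dimensional Hardy operator `H f x = (1/x) ∫₀ˣ f`. -/
noncomputable def hardyOp (f : ℝ → ℝ≥0∞) (x : ℝ) : ℝ≥0∞ :=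
  (ENNReal.ofReal x)⁻¹ * ∫⁻ t in Ioo (0 : ℝ) x, f t

lemma lint_Ioo_rpow {a : ℝ} (ha : -1 < a) {u x : ℝ} (hu : 0 ≤ u) (hux : u ≤ x) :
    ∫⁻ t in Ioo u x, ENNReal.ofReal (t ^ a) =
      ENNReal.ofReal ((x ^ (a + 1) - u ^ (a + 1)) / (a + 1)) := by
  rw [setLIntegral_congr Ioo_ae_eq_Ioc]
  rw [← ofReal_integral_eq_lintegral_ofReal]
  · rw [← intervalIntegral.integral_of_le hux, integral_rpow (Or.inl ha)]
  · exact (intervalIntegrable_iff_integrableOn_Ioc_of_le hux).mp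
      (intervalIntegral.intervalIntegrable_rpow' ha)
  · filter_upwards [ae_restrict_mem measurableSet_Ioc] with t ht
    exact Real.rpow_nonneg (le_trans hu ht.1.le) a

lemma lint_Ioi_rpow {a : ℝ} (ha : a < -1) {c : ℝ} (hc : 0 < c) :
    ∫⁻ x in Ioi c, ENNReal.ofReal (x ^ a) = ENNReal.ofReal (c ^ (a + 1) / (-(a + 1))) := by
  rw [← ofReal_integral_eq_lintegral_ofReal]
  · rw [integral_Ioi_rpow_of_lt ha hc]
    congr 1; rw [div_neg, neg_div]
  · exact integrableOn_Ioi_rpow_of_lt ha hc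
  · filter_upwards [ae_restrict_mem measurableSet_Ioi] with t ht
    exact Real.rpow_nonneg (hc.trans ht).le a

lemma hardy_main (p : ℝ) (hp : 1 < p) (f : ℝ → ℝ≥0∞) (hf : Measurable f) :
    (∫⁻ x in Ioi (0 : ℝ), hardyOp f x ^ p) ^ (1 / p)
      ≤ ENNReal.ofReal (p / (p - 1)) * (∫⁻ x in Ioi (0 : ℝ), f x ^ p) ^ (1 / p) := by
  have hp0 : (0:ℝ) < p := lt_trans one_pos hp
  set q : ℝ := p / (p - 1) with hqdef
  have hpq : p.HolderConjugate q := Real.HolderConjugate.conjExponent hp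
  have hq1 : 1 < q := hpq.symm.lt
  have hq0 : (0:ℝ) < q := lt_trans one_pos hq1
  have hqinv : 1/q = 1 - 1/p := by
    rw [one_div, one_div, hpq.one_sub_inv]
  set g : ℝ → ℝ≥0∞ := fun t => f t ^ p * ENNReal.ofReal (t ^ (1/q)) with hgdef
  have hg : Measurable g := by fun_prop
  set I : ℝ → ℝ≥0∞ := fun x => ∫⁻ t in Ioo 0 x, g t with hIdef
  -- pointwise Hölder estimate
  have key : ∀ x ∈ Ioi (0:ℝ), hardyOp f x ^ p ≤
      ENNReal.ofReal (q ^ (p-1)) * (ENNReal.ofReal (x ^ (-1 - 1/q)) * I x) := by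
    intro x hx
    rw [mem_Ioi] at hx
    have hA : ∫⁻ t in Ioo 0 x, f t =
        ∫⁻ t in Ioo 0 x, ((fun t => f t * ENNReal.ofReal (t ^ (1/(p*q)))) *
          (fun t => ENNReal.ofReal (t ^ (-(1/(p*q)))))) t := by
      refine setLIntegral_congr_fun measurableSet_Ioo (fun t ht => ?_)
      simp only [Pi.mul_apply]
      rw [mul_assoc, ← ENNReal.ofReal_mul (Real.rpow_nonneg ht.1.le _),
        ← Real.rpow_add ht.1]
      simp
    have hB := ENNReal.lintegral_mul_le_Lp_mul_Lq (volume.restrict (Ioo 0 x)) hpq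
        (f := fun t => f t * ENNReal.ofReal (t ^ (1/(p*q))))
        (g := fun t => ENNReal.ofReal (t ^ (-(1/(p*q)))))
        (by fun_prop) (by fun_prop)
    have hC : ∫⁻ t in Ioo 0 x, (f t * ENNReal.ofReal (t ^ (1/(p*q)))) ^ p = I x := by
      refine setLIntegral_congr_fun measurableSet_Ioo (fun t ht => ?_)
      rw [ENNReal.mul_rpow_of_nonneg _ _ hp0.le,
          ENNReal.ofReal_rpow_of_pos (Real.rpow_pos_of_pos ht.1 _),
          ← Real.rpow_mul ht.1.le,
          show 1/(p*q) * p = 1/q by field_simp <;> ring]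
    have hD : ∫⁻ t in Ioo 0 x, (ENNReal.ofReal (t ^ (-(1/(p*q))))) ^ q
        = ENNReal.ofReal (q * x ^ (1/q)) := by
      have h1 : ∫⁻ t in Ioo 0 x, (ENNReal.ofReal (t ^ (-(1/(p*q))))) ^ q
          = ∫⁻ t in Ioo 0 x, ENNReal.ofReal (t ^ (-(1/p))) := by
        refine setLIntegral_congr_fun measurableSet_Ioo (fun t ht => ?_)
        rw [ENNReal.ofReal_rpow_of_pos (Real.rpow_pos_of_pos ht.1 _), ← Real.rpow_mul ht.1.le,
          show -(1/(p*q)) * q = -(1/p) by field_simp <;> ring]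
      have hlt : -1 < -(1/p) := by
        have : 1/p < 1 := by rw [div_lt_one hp0]; exact hp
        linarith
      rw [h1, lint_Ioo_rpow hlt le_rfl hx.le,
        show -(1/p) + 1 = 1/q by rw [hqinv]; ring,
        Real.zero_rpow (by positivity), sub_zero]
      congr 1
      rw [div_eq_mul_inv, one_div, inv_inv, mul_comm]
    have hE : hardyOp f x ^ p ≤ ((ENNReal.ofReal x)⁻¹ *
        (I x ^ (1/p) * ENNReal.ofReal (q * x ^ (1/q)) ^ (1/q))) ^ p := by
      apply ENNReal.rpow_le_rpow _ hp0.le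
      unfold hardyOp
      refine mul_le_mul_right ?_ _
      rw [hA]
      refine le_trans hB (le_of_eq ?_)
      rw [hC, hD]
    refine le_trans hE (le_of_eq ?_)
    have hxq : (0:ℝ) < q * x ^ (1/q) := by positivity
    rw [ENNReal.mul_rpow_of_nonneg _ _ hp0.le, ENNReal.mul_rpow_of_nonneg _ _ hp0.le,
      ← ENNReal.rpow_mul (I x), ← ENNReal.rpow_mul,
      show 1/p * p = 1 by field_simp, ENNReal.rpow_one,
      show 1/q * p = p - 1 by rw [eq_comm, ← hpq.div_conj_eq_sub_one]; ring,
      ENNReal.inv_rpow, ENNReal.ofReal_rpow_of_pos hx,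
      ← ENNReal.ofReal_inv_of_pos (Real.rpow_pos_of_pos hx p),
      ← Real.rpow_neg hx.le,
      ENNReal.ofReal_rpow_of_pos hxq,
      Real.mul_rpow hq0.le (Real.rpow_nonneg hx.le _),
      ← Real.rpow_mul hx.le,
      ENNReal.ofReal_mul (by positivity)]
    rw [show (-1 - 1/q : ℝ) = -p + 1/q * (p-1) by rw [hqinv]; field_simp; ring,
      Real.rpow_add hx, ENNReal.ofReal_mul (by positivity)]
    ring
  have step1 : ∫⁻ x in Ioi (0:ℝ), hardyOp f x ^ p ≤
      ENNReal.ofReal (q ^ (p-1)) * ∫⁻ x in Ioi (0:ℝ), ENNReal.ofReal (x ^ (-1 - 1/q)) * I x := by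
    rw [← lintegral_const_mul' _ _ ENNReal.ofReal_ne_top]
    exact setLIntegral_mono' measurableSet_Ioi key
  set c : ℝ := -1 - 1/q with hcdef
  have hclt : c < -1 := by
    have : 0 < 1/q := by positivity
    simp only [hcdef]; linarith
  set S : Set (ℝ × ℝ) := {z : ℝ × ℝ | 0 < z.2 ∧ z.2 < z.1} with hSdef
  have hS : MeasurableSet S := (measurableSet_lt measurable_const measurable_snd).inter
      (measurableSet_lt measurable_snd measurable_fst)
  set Func : ℝ × ℝ → ℝ≥0∞ := fun z => ENNReal.ofReal (z.1 ^ c) * S.indicator (fun w => g w.2) z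
    with hFdef
  have hFm : Measurable Func := by
    apply Measurable.mul
    · fun_prop
    · exact (hg.comp measurable_snd).indicator hS
  have step2 : ∫⁻ x in Ioi (0:ℝ), ENNReal.ofReal (x ^ c) * I x
      = ∫⁻ x in Ioi (0:ℝ), ∫⁻ t in Ioi (0:ℝ), Func (x, t) := by
    refine setLIntegral_congr_fun measurableSet_Ioi (fun x hx => ?_)
    calc ENNReal.ofReal (x ^ c) * I x
        = ENNReal.ofReal (x ^ c) * ∫⁻ t in Ioi (0:ℝ), (Ioo 0 x).indicator g t := by
          rw [lintegral_indicator measurableSet_Ioo, Measure.restrict_restrict measurableSet_Ioo,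
            inter_eq_self_of_subset_left Ioo_subset_Ioi_self]
      _ = ∫⁻ t in Ioi (0:ℝ), ENNReal.ofReal (x ^ c) * (Ioo 0 x).indicator g t :=
          (lintegral_const_mul' _ _ ENNReal.ofReal_ne_top).symm
      _ = ∫⁻ t in Ioi (0:ℝ), Func (x, t) := by
          refine lintegral_congr fun t => ?_
          simp only [hFdef, hSdef, indicator_apply, mem_Ioo, mem_setOf_eq]
  have step3 : ∫⁻ x in Ioi (0:ℝ), ∫⁻ t in Ioi (0:ℝ), Func (x, t)
      = ∫⁻ t in Ioi (0:ℝ), ∫⁻ x in Ioi (0:ℝ), Func (x, t) :=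
    lintegral_lintegral_swap hFm.aemeasurable
  have step4 : ∀ t ∈ Ioi (0:ℝ), ∫⁻ x in Ioi (0:ℝ), Func (x, t) = ENNReal.ofReal q * f t ^ p := by
    intro t ht
    rw [mem_Ioi] at ht
    have h1 : ∀ x, Func (x, t) = (Ioi t).indicator (fun x => ENNReal.ofReal (x ^ c) * g t) x := by
      intro x
      simp only [hFdef, hSdef, indicator_apply, mem_setOf_eq, mem_Ioi]
      by_cases hxt : t < x
      · simp [hxt, ht]
      · simp [hxt, ht]
    calc ∫⁻ x in Ioi (0:ℝ), Func (x, t)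
        = ∫⁻ x in Ioi (0:ℝ), (Ioi t).indicator (fun x => ENNReal.ofReal (x ^ c) * g t) x :=
          lintegral_congr fun x => h1 x
      _ = ∫⁻ x in Ioi t, ENNReal.ofReal (x ^ c) * g t := by
          rw [lintegral_indicator measurableSet_Ioi, Measure.restrict_restrict measurableSet_Ioi,
            inter_eq_self_of_subset_left (Ioi_subset_Ioi ht.le)]
      _ = (∫⁻ x in Ioi t, ENNReal.ofReal (x ^ c)) * g t :=
          lintegral_mul_const'' _ (by fun_prop)
      _ = ENNReal.ofReal (t ^ (c+1) / (-(c+1))) * g t := by rw [lint_Ioi_rpow hclt ht]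
      _ = ENNReal.ofReal q * f t ^ p := by
          have hc1 : c + 1 = -(1/q) := by simp only [hcdef]; ring
          rw [hc1, hgdef]
          simp only []
          rw [neg_neg, mul_comm (f t ^ p) (ENNReal.ofReal (t ^ (1/q))), ← mul_assoc,
            ← ENNReal.ofReal_mul (div_nonneg (Real.rpow_nonneg ht.le _) (one_div_nonneg.mpr hq0.le))]
          congr 2
          rw [div_mul_eq_mul_div, ← Real.rpow_add ht]
          simp
  have step5 : ∫⁻ x in Ioi (0:ℝ), hardyOp f x ^ p ≤
      ENNReal.ofReal (q ^ (p-1)) * (ENNReal.ofReal q * ∫⁻ t in Ioi (0:ℝ), f t ^ p) := by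
    refine le_trans step1 (mul_le_mul_right (le_of_eq ?_) _)
    rw [step2, step3, setLIntegral_congr_fun measurableSet_Ioi step4]
    exact lintegral_const_mul' _ _ ENNReal.ofReal_ne_top
  calc (∫⁻ x in Ioi (0:ℝ), hardyOp f x ^ p) ^ (1/p)
      ≤ (ENNReal.ofReal (q ^ (p-1)) * (ENNReal.ofReal q * ∫⁻ t in Ioi (0:ℝ), f t ^ p)) ^ (1/p) :=
        ENNReal.rpow_le_rpow step5 (by positivity)
    _ = ENNReal.ofReal q * (∫⁻ x in Ioi (0:ℝ), f x ^ p) ^ (1/p) := by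
        rw [← mul_assoc, ← ENNReal.ofReal_mul (by positivity),
          ← Real.rpow_add_one hq0.ne' (p-1), show p - 1 + 1 = p by ring,
          ENNReal.mul_rpow_of_nonneg _ _ (by positivity),
          ENNReal.ofReal_rpow_of_pos (by positivity),
          ← Real.rpow_mul hq0.le, show p * (1/p) = 1 by field_simp, Real.rpow_one]

lemma hardy_sharp (p : ℝ) (hp : 1 < p) (C : ℝ≥0∞)
    (hC : ∀ f : ℝ → ℝ≥0∞, Measurable f →
      (∫⁻ x in Ioi (0 : ℝ), hardyOp f x ^ p) ^ (1 / p)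
        ≤ C * (∫⁻ x in Ioi (0 : ℝ), f x ^ p) ^ (1 / p)) :
    ENNReal.ofReal (p / (p - 1)) ≤ C := by
  have hp0 : (0:ℝ) < p := lt_trans one_pos hp
  by_contra hcon
  push_neg at hcon
  have hCtop : C ≠ ∞ := ne_top_of_lt (lt_of_lt_of_le hcon le_top)
  set q : ℝ := p/(p-1) with hqdef
  have hq0 : 0 < q := div_pos (by linarith) (by linarith)
  set r : ℝ := C.toReal with hrdef
  have hr : r < q := by
    rw [hrdef, ← ENNReal.lt_ofReal_iff_toReal_lt hCtop]; exact hcon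
  -- main quantitative claim
  have claim : ∀ ε δ X : ℝ, 0 < ε → ε ≤ (p-1)/2 → 0 < δ → δ < 1 → 1 ≤ X →
      (∀ x : ℝ, X ≤ x → x ^ (-(1 - (1+ε)/p)) ≤ δ) →
      (1 - δ)/(1 - (1+ε)/p) * X ^ (-(ε/p)) ≤ r := by
    intro ε δ X hε hε2 hδ hδ1 hX hXd
    have hX0 : (0:ℝ) < X := lt_of_lt_of_le one_pos hX
    have hδ1' : (0:ℝ) < 1 - δ := by linarith
    set b : ℝ := 1 - (1+ε)/p with hbdef
    have hb0 : 0 < b := by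
      rw [hbdef, sub_pos, div_lt_one hp0]; linarith
    set A : ℝ := (1 - δ)/b with hAdef
    have hA0 : 0 < A := div_pos hδ1' hb0
    have hbm : -1 < (-(1+ε))/p := by
      rw [neg_div, neg_lt_neg_iff, div_lt_one hp0]; linarith
    set fε : ℝ → ℝ≥0∞ :=
      fun t => (Ioi 1).indicator (fun t => ENNReal.ofReal (t ^ ((-(1+ε))/p))) t with hfdef
    have hfm : Measurable fε := Measurable.indicator (by fun_prop) measurableSet_Ioi
    have hRHS : ∫⁻ x in Ioi (0:ℝ), fε x ^ p = ENNReal.ofReal (ε⁻¹) := by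
      have h1 : ∀ x : ℝ, fε x ^ p
          = (Ioi 1).indicator (fun t => ENNReal.ofReal (t ^ (-(1+ε)))) x := by
        intro x
        rw [hfdef]
        simp only [indicator_apply]
        split_ifs with h
        · rw [mem_Ioi] at h
          rw [ENNReal.ofReal_rpow_of_pos (Real.rpow_pos_of_pos (lt_trans one_pos h) _),
            ← Real.rpow_mul (le_of_lt (lt_trans one_pos h)), div_mul_cancel₀ _ hp0.ne']
        · exact ENNReal.zero_rpow_of_pos hp0
      rw [lintegral_congr h1, lintegral_indicator measurableSet_Ioi,
        Measure.restrict_restrict measurableSet_Ioi,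
        inter_eq_self_of_subset_left (Ioi_subset_Ioi zero_le_one),
        lint_Ioi_rpow (by linarith) one_pos,
        show (-(1+ε)+1 : ℝ) = -ε by ring, Real.one_rpow, neg_neg, one_div]
    -- lower bound for the LHS
    have hLHS : ENNReal.ofReal (A^p * (X ^ (-ε) * ε⁻¹))
        ≤ ∫⁻ x in Ioi (0:ℝ), hardyOp fε x ^ p := by
      have e1 : ∫⁻ x in Ioi X, ENNReal.ofReal (A^p) * ENNReal.ofReal (x ^ (-(1+ε)))
          = ENNReal.ofReal (A^p * (X ^ (-ε) * ε⁻¹)) := by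
        rw [lintegral_const_mul' _ _ ENNReal.ofReal_ne_top,
          lint_Ioi_rpow (by linarith : (-(1+ε):ℝ) < -1) hX0,
          show (-(1+ε)+1 : ℝ) = -ε by ring, neg_neg, div_eq_mul_inv,
          ← ENNReal.ofReal_mul (Real.rpow_nonneg hA0.le _)]
      rw [← e1]
      refine le_trans (le_of_le_of_eq (le_refl _) rfl) ?_
      refine le_trans (setLIntegral_mono' measurableSet_Ioi fun x hx => ?_)
        (lintegral_mono_set (Ioi_subset_Ioi (by linarith : (0:ℝ) ≤ X)))
      rw [mem_Ioi] at hx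
      have hx1 : (1:ℝ) < x := lt_of_le_of_lt hX hx
      have hx0 : (0:ℝ) < x := lt_trans one_pos hx1
      have heq : Ioi (1:ℝ) ∩ Ioo 0 x = Ioo 1 x := by
        ext t
        simp only [mem_inter_iff, mem_Ioi, mem_Ioo]
        constructor
        · rintro ⟨h1, _, h2⟩; exact ⟨h1, h2⟩
        · rintro ⟨h1, h2⟩; exact ⟨h1, lt_trans one_pos h1, h2⟩
      have hin : ∫⁻ t in Ioo 0 x, fε t = ENNReal.ofReal ((x ^ b - 1)/b) := by
        rw [hfdef, lintegral_indicator measurableSet_Ioi,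
          Measure.restrict_restrict measurableSet_Ioi, heq,
          lint_Ioo_rpow hbm zero_le_one hx1.le,
          show ((-(1+ε))/p + 1 : ℝ) = b by rw [hbdef]; ring, Real.one_rpow]
      have hxb1 : (0:ℝ) < x ^ b - 1 := by
        rw [sub_pos]
        exact Real.one_lt_rpow_iff_of_pos hx0 |>.mpr (Or.inl ⟨hx1, hb0⟩)
      have hhop : hardyOp fε x = ENNReal.ofReal (x⁻¹ * ((x ^ b - 1)/b)) := by
        rw [hardyOp, hin, ← ENNReal.ofReal_inv_of_pos hx0,
          ← ENNReal.ofReal_mul (inv_nonneg.mpr hx0.le)]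
      rw [hhop, ENNReal.ofReal_rpow_of_nonneg
          (mul_nonneg (inv_nonneg.mpr hx0.le) (div_nonneg hxb1.le hb0.le)) hp0.le,
        ← ENNReal.ofReal_mul (Real.rpow_nonneg hA0.le _)]
      apply ENNReal.ofReal_le_ofReal
      -- real inequality
      have hxb : x ^ (-b) ≤ δ := hXd x hx.le
      have hxbp : (0:ℝ) < x ^ b := Real.rpow_pos_of_pos hx0 b
      have h1d : 1 ≤ δ * x ^ b := by
        rw [Real.rpow_neg hx0.le] at hxb
        calc (1:ℝ) = (x^b)⁻¹ * x^b := by field_simp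
          _ ≤ δ * x ^ b := mul_le_mul_of_nonneg_right hxb hxbp.le
      have hbase : A * x ^ (b-1) ≤ x⁻¹ * ((x ^ b - 1)/b) := by
        have key2 : (1-δ) * x ^ b ≤ x ^ b - 1 := by linarith
        calc A * x ^ (b-1) = ((1-δ) * x^b) * (x⁻¹ / b) := by
              rw [Real.rpow_sub hx0, Real.rpow_one, hAdef]; ring
          _ ≤ (x^b - 1) * (x⁻¹ / b) :=
              mul_le_mul_of_nonneg_right key2
                (div_nonneg (inv_nonneg.mpr hx0.le) hb0.le)
          _ = x⁻¹ * ((x^b - 1)/b) := by ring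
      calc A^p * x ^ (-(1+ε)) = (A * x ^ (b-1))^p := by
            rw [Real.mul_rpow hA0.le (Real.rpow_nonneg hx0.le _),
              ← Real.rpow_mul hx0.le,
              show (b-1)*p = -(1+ε) by rw [hbdef]; field_simp; ring]
        _ ≤ (x⁻¹ * ((x^b-1)/b))^p :=
            Real.rpow_le_rpow (mul_nonneg hA0.le (Real.rpow_nonneg hx0.le _)) hbase hp0.le
    -- combine with hC
    have hCf := hC fε hfm
    rw [hRHS] at hCf
    have hL1 : ENNReal.ofReal (A^p * (X ^ (-ε) * ε⁻¹)) ^ (1/p)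
        ≤ C * ENNReal.ofReal (ε⁻¹) ^ (1/p) :=
      le_trans (ENNReal.rpow_le_rpow hLHS (by positivity)) hCf
    have hε1 : (0:ℝ) < ε⁻¹ := inv_pos.mpr hε
    have e2 : ENNReal.ofReal (A^p * (X ^ (-ε) * ε⁻¹)) ^ (1/p)
        = ENNReal.ofReal (A * X ^ (-(ε/p))) * ENNReal.ofReal (ε⁻¹ ^ (1/p)) := by
      rw [ENNReal.ofReal_rpow_of_nonneg
          (mul_nonneg (Real.rpow_nonneg hA0.le _)
            (mul_nonneg (Real.rpow_nonneg hX0.le _) hε1.le)) (by positivity),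
        ← ENNReal.ofReal_mul (mul_nonneg hA0.le (Real.rpow_nonneg hX0.le _))]
      congr 1
      rw [Real.mul_rpow (Real.rpow_nonneg hA0.le _)
          (mul_nonneg (Real.rpow_nonneg hX0.le _) hε1.le),
        Real.mul_rpow (Real.rpow_nonneg hX0.le _) hε1.le,
        ← Real.rpow_mul hA0.le, mul_one_div, div_self hp0.ne', Real.rpow_one,
        ← Real.rpow_mul hX0.le, show -ε * (1/p) = -(ε/p) by ring, mul_assoc]
    rw [e2, ENNReal.ofReal_rpow_of_pos hε1] at hL1
    have hcancel := (ENNReal.mul_le_mul_iff_left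
        (a := ENNReal.ofReal (A * X ^ (-(ε/p)))) (b := C)
        (ENNReal.ofReal_pos.mpr (Real.rpow_pos_of_pos hε1 _)).ne'
        ENNReal.ofReal_ne_top).mp hL1
    exact (ENNReal.ofReal_le_iff_le_toReal hCtop).mp hcancel
  -- choose δ
  set δ : ℝ := min (1/2) ((q - r)/(2*q)) with hδdef
  have hδ0 : 0 < δ := lt_min (by norm_num) (div_pos (by linarith) (by linarith))
  have hδ1 : δ < 1 := lt_of_le_of_lt (min_le_left _ _) (by norm_num)
  have hδq : δ * q ≤ (q - r)/2 := by
    calc δ * q ≤ ((q-r)/(2*q)) * q := mul_le_mul_of_nonneg_right (min_le_right _ _) hq0.le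
      _ = (q-r)/2 := by field_simp
  have hrL : r < (1 - δ) * q := by nlinarith
  set X : ℝ := max 1 (δ ^ (-(2*p/(p-1)))) with hXdef
  have hX1 : (1:ℝ) ≤ X := le_max_left _ _
  have hX0 : (0:ℝ) < X := lt_of_lt_of_le one_pos hX1
  -- X is large enough
  have hXd : ∀ ε : ℝ, 0 < ε → ε ≤ (p-1)/2 → ∀ x : ℝ, X ≤ x → x ^ (-(1 - (1+ε)/p)) ≤ δ := by
    intro ε hε hε2 x hx
    have hx1 : (1:ℝ) ≤ x := le_trans hX1 hx
    have hx0 : (0:ℝ) < x := lt_of_lt_of_le one_pos hx1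
    set b0 : ℝ := (p-1)/(2*p) with hb0def
    have hb00 : 0 < b0 := div_pos (by linarith) (by linarith)
    have hbb : b0 ≤ 1 - (1+ε)/p := by
      have e : (1 - (1+ε)/p) * p = p - (1+ε) := by field_simp
      have e2 : b0 * p = (p-1)/2 := by rw [hb0def]; field_simp
      nlinarith
    have s1 : x ^ (-(1 - (1+ε)/p)) ≤ x ^ (-b0) :=
      Real.rpow_le_rpow_of_exponent_le hx1 (by linarith)
    have s2 : x ^ (-b0) ≤ δ := by
      have hXx : δ ^ (-(1/b0)) ≤ x := by
        refine le_trans (le_trans (le_of_eq ?_) (le_max_right 1 _)) hx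
        congr 1
        rw [hb0def]
        field_simp
      have h3 : δ⁻¹ ≤ x ^ b0 := by
        calc δ⁻¹ = (δ ^ (-(1/b0))) ^ b0 := by
              rw [← Real.rpow_mul hδ0.le,
                show -(1/b0) * b0 = -1 by field_simp, Real.rpow_neg_one]
          _ ≤ x ^ b0 := Real.rpow_le_rpow (Real.rpow_nonneg hδ0.le _) hXx hb00.le
      rw [Real.rpow_neg hx0.le]
      calc (x ^ b0)⁻¹ ≤ (δ⁻¹)⁻¹ := by
            apply inv_anti₀ (inv_pos.mpr hδ0) h3
        _ = δ := inv_inv δ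
    exact le_trans s1 s2
  -- limit argument
  have hφ : Tendsto (fun ε : ℝ => (1 - δ)/(1 - (1+ε)/p) * X ^ (-(ε/p))) (𝓝[>] 0)
      (𝓝 ((1 - δ) * q)) := by
    have c1 : ContinuousAt (fun ε : ℝ => (1 - δ)/(1 - (1+ε)/p)) 0 := by
      apply ContinuousAt.div continuousAt_const (by fun_prop)
      have : (1:ℝ) - (1+0)/p = (p-1)/p := by field_simp; ring
      rw [this]
      exact ne_of_gt (div_pos (by linarith) hp0)
    have c2 : ContinuousAt (fun ε : ℝ => X ^ (-(ε/p))) 0 := by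
      have heq : (fun ε : ℝ => X ^ (-(ε/p))) = fun ε => Real.exp (Real.log X * (-(ε/p))) := by
        funext ε; rw [Real.rpow_def_of_pos hX0]
      rw [heq]; fun_prop
    have hT := (c1.mul c2).tendsto
    have h0 : (1 - δ)/(1 - (1+(0:ℝ))/p) * X ^ (-((0:ℝ)/p)) = (1-δ)*q := by
      rw [show -((0:ℝ)/p) = 0 by ring, Real.rpow_zero, mul_one, hqdef]
      rw [show (1:ℝ) - (1+0)/p = (p-1)/p by field_simp; ring]
      rw [div_div_eq_mul_div]
      ring
    rw [← h0]
    exact hT.mono_left nhdsWithin_le_nhds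
  have hev1 : ∀ᶠ ε in 𝓝[>] (0:ℝ), r < (1 - δ)/(1 - (1+ε)/p) * X ^ (-(ε/p)) :=
    hφ.eventually (eventually_gt_nhds hrL)
  have hev2 : ∀ᶠ ε in 𝓝[>] (0:ℝ), ε ≤ (p-1)/2 := by
    have : ∀ᶠ ε in 𝓝 (0:ℝ), ε < (p-1)/2 := eventually_lt_nhds (by linarith)
    exact (this.filter_mono nhdsWithin_le_nhds).mono fun x h => h.le
  have hev3 : ∀ᶠ ε in 𝓝[>] (0:ℝ), 0 < ε := eventually_mem_nhdsWithin
  obtain ⟨ε, h1, h2, h3⟩ := (hev1.and (hev2.and hev3)).exists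
  have := claim ε δ X h3 h2 hδ0 hδ1 hX1 (hXd ε h3 h2)
  linarith

/-- Hardy's inequality on `L^p(0,∞)` with sharp constant `p/(p-1)`. -/
theorem hardy_inequality_sharp (p : ℝ) (hp : 1 < p) :
    (∀ f : ℝ → ℝ≥0∞, Measurable f →
      (∫⁻ x in Ioi (0 : ℝ), hardyOp f x ^ p) ^ (1 / p)
        ≤ ENNReal.ofReal (p / (p - 1)) * (∫⁻ x in Ioi (0 : ℝ), f x ^ p) ^ (1 / p)) ∧
    (∀ C : ℝ≥0∞,
      (∀ f : ℝ → ℝ≥0∞, Measurable f →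
        (∫⁻ x in Ioi (0 : ℝ), hardyOp f x ^ p) ^ (1 / p)
          ≤ C * (∫⁻ x in Ioi (0 : ℝ), f x ^ p) ^ (1 / p)) →
      ENNReal.ofReal (p / (p - 1)) ≤ C) :=
  ⟨fun f hf => hardy_main p hp f hf, fun C hC => hardy_sharp p hp C hC⟩
end

section
/- For n ≥ 1, q > 1, 0 < β < n with n/(q'β) > 1, one has ∫₀^∞ (s^n(1+s^{qβ})^{-n/(qβ)})^q s^{q(β-n)} s^{n-1} n ds = (n/(qβ)) · B(n/(qβ)+1, n/(q'β)-1). -/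
open MeasureTheory Set
open scoped ENNReal

/-- The Euler Beta function `B(z,w) = ∫₀¹ t^(z-1) (1-t)^(w-1) dt`. -/
noncomputable def betaFn (z w : ℝ) : ℝ :=
  ∫ t in Ioo (0 : ℝ) 1, t ^ (z - 1) * (1 - t) ^ (w - 1)

/-- Evaluation of the left-hand side of the fractional Hardy inequality at the
extremal function, after the polar-coordinate reduction. -/
theorem radial_Lq_norm_extremal (n : ℕ) (hn : 1 ≤ n) (q β : ℝ)
    (hq : 1 < q) (hβ0 : 0 < β) (hβn : β < n)
    (hbig : 1 < (n : ℝ) / ((q / (q - 1)) * β)) :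
    ∫ s in Ioi (0 : ℝ),
        (s ^ (n : ℝ) * (1 + s ^ (q * β)) ^ (-((n : ℝ) / (q * β)))) ^ q *
          s ^ (q * (β - (n : ℝ))) * s ^ ((n : ℝ) - 1) * (n : ℝ)
      = ((n : ℝ) / (q * β)) *
          betaFn ((n : ℝ) / (q * β) + 1) ((n : ℝ) / ((q / (q - 1)) * β) - 1) := by
  have hq0 : 0 < q := lt_trans one_pos hq
  set c : ℝ := q * β with hc
  have hc0 : 0 < c := mul_pos hq0 hβ0
  set φ : ℝ → ℝ := fun t => (t / (1 - t)) ^ c⁻¹ with hφ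
  set φ' : ℝ → ℝ := fun t => c⁻¹ * (t / (1 - t)) ^ (c⁻¹ - 1) / (1 - t) ^ 2 with hφ'
  set g : ℝ → ℝ := fun s =>
    (s ^ (n : ℝ) * (1 + s ^ (q * β)) ^ (-((n : ℝ) / (q * β)))) ^ q *
      s ^ (q * (β - (n : ℝ))) * s ^ ((n : ℝ) - 1) * (n : ℝ) with hg
  have himg : φ '' Ioo (0 : ℝ) 1 = Ioi (0 : ℝ) := by
    ext s
    constructor
    · rintro ⟨t, ⟨ht0, ht1⟩, rfl⟩
      exact Real.rpow_pos_of_pos (div_pos ht0 (by linarith)) _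
    · intro hs
      have hs0 : (0 : ℝ) < s := hs
      have hsc : (0 : ℝ) < s ^ c := Real.rpow_pos_of_pos hs0 c
      refine ⟨s ^ c / (1 + s ^ c), ⟨div_pos hsc (by linarith), ?_⟩, ?_⟩
      · rw [div_lt_one (by linarith)]; linarith
      · have h1 : 1 - s ^ c / (1 + s ^ c) = 1 / (1 + s ^ c) := by
          field_simp
          ring
        simp only [hφ, h1]
        rw [show s ^ c / (1 + s ^ c) / (1 / (1 + s ^ c)) = s ^ c by
          field_simp]
        exact Real.rpow_rpow_inv hs0.le hc0.ne'
  have hderiv : ∀ t ∈ Ioo (0 : ℝ) 1, HasDerivWithinAt φ (φ' t) (Ioo (0 : ℝ) 1) t := by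
    intro t ⟨ht0, ht1⟩
    have h1t : (0 : ℝ) < 1 - t := by linarith
    have hA : (0 : ℝ) < t / (1 - t) := div_pos ht0 h1t
    have hd : HasDerivAt (fun y : ℝ => y / (1 - y)) (1 / (1 - t) ^ 2) t := by
      have := (hasDerivAt_id t).div ((hasDerivAt_id t).const_sub 1) h1t.ne'
      refine this.congr_deriv ?_
      simp only [id]; ring
    have := hd.rpow_const (p := c⁻¹) (Or.inl hA.ne')
    refine HasDerivAt.hasDerivWithinAt ?_
    refine this.congr_deriv ?_
    simp only [hφ']
    ring
  have hinj : InjOn φ (Ioo (0 : ℝ) 1) := by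
    intro a ⟨ha0, ha1⟩ b ⟨hb0, hb1⟩ hab
    have h1a : (0 : ℝ) < 1 - a := by linarith
    have h1b : (0 : ℝ) < 1 - b := by linarith
    have hAa : (0 : ℝ) ≤ a / (1 - a) := (div_pos ha0 h1a).le
    have hAb : (0 : ℝ) ≤ b / (1 - b) := (div_pos hb0 h1b).le
    have h2 : a / (1 - a) = b / (1 - b) := by
      have := congrArg (fun x : ℝ => x ^ c) hab
      simpa [hφ, Real.rpow_inv_rpow hAa hc0.ne', Real.rpow_inv_rpow hAb hc0.ne'] using this
    field_simp at h2
    linarith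
  have key := integral_image_eq_integral_abs_deriv_smul measurableSet_Ioo hderiv hinj g
  rw [himg] at key
  rw [show (∫ s in Ioi (0:ℝ),
        (s ^ (n : ℝ) * (1 + s ^ (q * β)) ^ (-((n : ℝ) / (q * β)))) ^ q *
          s ^ (q * (β - (n : ℝ))) * s ^ ((n : ℝ) - 1) * (n : ℝ)) = ∫ s in Ioi (0:ℝ), g s from rfl,
    key]
  rw [betaFn, ← integral_const_mul]
  apply setIntegral_congr_fun measurableSet_Ioo
  intro t ⟨ht0, ht1⟩
  have h1t : (0 : ℝ) < 1 - t := by linarith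
  have hA : (0 : ℝ) < t / (1 - t) := div_pos ht0 h1t
  have hn0 : (0 : ℝ) < (n : ℝ) := by
    have : 0 < n := hn
    exact_mod_cast this
  have hq1 : (0 : ℝ) < q - 1 := by linarith
  have hs0 : (0 : ℝ) < (t / (1 - t)) ^ c⁻¹ := Real.rpow_pos_of_pos hA _
  have hsc : ((t / (1 - t)) ^ c⁻¹) ^ c = t / (1 - t) := Real.rpow_inv_rpow hA.le hc0.ne'
  simp only [hφ', hg, hφ, smul_eq_mul]
  rw [hsc]
  rw [abs_of_pos (by positivity)]
  rw [show 1 + t / (1 - t) = (1 - t)⁻¹ by field_simp; ring]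
  have hL : (0 : ℝ) < c⁻¹ * (t / (1 - t)) ^ (c⁻¹ - 1) / (1 - t) ^ 2 *
      ((((t / (1 - t)) ^ c⁻¹) ^ (n : ℝ) * ((1 - t)⁻¹) ^ (-((n : ℝ) / c))) ^ q *
        ((t / (1 - t)) ^ c⁻¹) ^ (q * (β - (n : ℝ))) *
        ((t / (1 - t)) ^ c⁻¹) ^ ((n : ℝ) - 1) * (n : ℝ)) := by positivity
  have hR : (0 : ℝ) < (n : ℝ) / c *
      (t ^ ((n : ℝ) / c + 1 - 1) * (1 - t) ^ ((n : ℝ) / (q / (q - 1) * β) - 1 - 1)) := by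
    positivity
  rw [← Real.exp_log hL, ← Real.exp_log hR]
  congr 1
  simp (disch := positivity) only [Real.log_mul, Real.log_div, Real.log_inv, Real.log_rpow,
    Real.log_pow]
  rw [hc]
  field_simp
  ring
end

section
/- Let 1 ≤ p < q < ∞, 0 ≤ β_i < n_i, and let weights |x|^α = ∏|x_i|^{α_i}, |x|^γ = ∏|x_i|^{γ_i} on ℝ^{n₁}×⋯×ℝ^{n_m}. Then the operator norm of 𝓗_{β₁,…,β_m} from L^p(|x|^γ) to L^q(|x|^α) equals its operator norm restricted to radial functions (functions of (|x₁|,…,|x_m|) only). In particular, for every f, ‖𝓗(f)‖_{L^q(|x|^α)}/‖f‖_{L^p(|x|^γ)} ≤ ‖𝓗(g_{|f|})‖_{L^q(|x|^α)}/‖g_{|f|}‖_{L^p(|x|^γ)}, where g_{|f|} is the spherical average of |f|. -/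
open MeasureTheory Set
open scoped ENNReal

/-- Surface area `ω_n = 2 π^{n/2} / Γ(n/2)` of the unit sphere `S^{n-1}`. -/
noncomputable def omegaN (n : ℕ) : ℝ :=
  2 * Real.pi ^ ((n : ℝ) / 2) / Real.Gamma ((n : ℝ) / 2)

/-- The fractional Hardy operator `𝓗_{β₁,…,β_m}` on `ℝ^{n₁} × ⋯ × ℝ^{n_m}`. -/
noncomputable def prodFracHardy (m : ℕ) (n : Fin m → ℕ) (β : Fin m → ℝ)
    (f : (∀ i, EuclideanSpace ℝ (Fin (n i))) → ℝ≥0∞)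
    (x : ∀ i, EuclideanSpace ℝ (Fin (n i))) : ℝ≥0∞ :=
  (∏ i, (volume (Metric.ball (0 : EuclideanSpace ℝ (Fin (n i))) ‖x i‖)) ^
      (β i / (n i : ℝ) - 1)) *
    ∫⁻ y in {y : ∀ i, EuclideanSpace ℝ (Fin (n i)) | ∀ i, ‖y i‖ < ‖x i‖}, f y

/-- The spherical average `g_f` of `f` on `ℝ^{n₁} × ⋯ × ℝ^{n_m}`. -/
noncomputable def sphAvgM (m : ℕ) (n : Fin m → ℕ)
    (f : (∀ i, EuclideanSpace ℝ (Fin (n i))) → ℝ≥0∞)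
    (x : ∀ i, EuclideanSpace ℝ (Fin (n i))) : ℝ≥0∞ :=
  (ENNReal.ofReal (∏ i, omegaN (n i)))⁻¹ *
    ∫⁻ ξ : ∀ i, Metric.sphere (0 : EuclideanSpace ℝ (Fin (n i))) 1,
        f (fun i => ‖x i‖ • (ξ i : EuclideanSpace ℝ (Fin (n i))))
      ∂(Measure.pi fun i => (volume : Measure (EuclideanSpace ℝ (Fin (n i)))).toSphere)

/-- The quotient `‖𝓗 f‖_{L^q(|x|^α)} / ‖f‖_{L^p(|x|^γ)}`. -/
noncomputable def hardyRatio (m : ℕ) (n : Fin m → ℕ) (β α γ : Fin m → ℝ) (p q : ℝ)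
    (f : (∀ i, EuclideanSpace ℝ (Fin (n i))) → ℝ≥0∞) : ℝ≥0∞ :=
  (∫⁻ x, prodFracHardy m n β f x ^ q *
      ENNReal.ofReal (∏ i, ‖x i‖ ^ α i)) ^ (1 / q) /
  (∫⁻ x, f x ^ p * ENNReal.ofReal (∏ i, ‖x i‖ ^ γ i)) ^ (1 / p)

namespace RadialAux



variable {ι : Type*} [Fintype ι] {X : ι → Type*} {Y : ι → Type*}
  [∀ i, MeasurableSpace (X i)] [∀ i, MeasurableSpace (Y i)]

/-- Dependent version of `MeasurableEquiv.arrowProdEquivProdArrow`. -/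
def piProd : (∀ i, X i × Y i) ≃ᵐ (∀ i, X i) × (∀ i, Y i) where
  toFun z := (fun i => (z i).1, fun i => (z i).2)
  invFun w i := (w.1 i, w.2 i)
  left_inv _ := rfl
  right_inv _ := rfl
  measurable_toFun := Measurable.prodMk
    (measurable_pi_lambda _ fun i => (measurable_pi_apply i).fst)
    (measurable_pi_lambda _ fun i => (measurable_pi_apply i).snd)
  measurable_invFun := measurable_pi_lambda _ fun i =>
    ((measurable_pi_apply i).comp measurable_fst).prodMk
      ((measurable_pi_apply i).comp measurable_snd)

theorem measurePreserving_piProd (μ : ∀ i, Measure (X i)) (ν : ∀ i, Measure (Y i))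
    [∀ i, SigmaFinite (μ i)] [∀ i, SigmaFinite (ν i)] :
    MeasurePreserving (piProd (X := X) (Y := Y))
      (.pi fun i => (μ i).prod (ν i)) ((Measure.pi μ).prod (Measure.pi ν)) where
  measurable := piProd.measurable
  map_eq := by
    refine (Measure.FiniteSpanningSetsIn.ext ?_ (isPiSystem_pi.prod isPiSystem_pi)
      ((Measure.FiniteSpanningSetsIn.pi fun i => (μ i).toFiniteSpanningSetsIn).prod
      (Measure.FiniteSpanningSetsIn.pi fun i => (ν i).toFiniteSpanningSetsIn)) ?_).symm
    · refine (generateFrom_eq_prod generateFrom_pi generateFrom_pi ?_ ?_).symm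
      · exact (Measure.FiniteSpanningSetsIn.pi
          fun i => (μ i).toFiniteSpanningSetsIn).isCountablySpanning
      · exact (Measure.FiniteSpanningSetsIn.pi
          fun i => (ν i).toFiniteSpanningSetsIn).isCountablySpanning
    · rintro _ ⟨s, ⟨s, _, rfl⟩, ⟨_, ⟨t, _, rfl⟩, rfl⟩⟩
      rw [MeasurableEquiv.map_apply]
      rw [show piProd ⁻¹' ((univ.pi s) ×ˢ (univ.pi t)) =
          univ.pi fun i => s i ×ˢ t i by
        ext z; simp [piProd, Set.mem_pi, forall_and]]
      simp_rw [Measure.pi_pi, Measure.prod_prod, Measure.pi_pi, Finset.prod_mul_distrib]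

theorem mp_factor (k : ℕ) (hk : 1 ≤ k) :
    MeasurePreserving
      (fun p : Metric.sphere (0 : EuclideanSpace ℝ (Fin k)) 1 × Ioi (0 : ℝ) =>
        (p.2 : ℝ) • (p.1 : EuclideanSpace ℝ (Fin k)))
      (((volume : Measure (EuclideanSpace ℝ (Fin k))).toSphere).prod
        (Measure.volumeIoiPow (k - 1)))
      volume := by
  set E := EuclideanSpace ℝ (Fin k)
  haveI : Nontrivial E := by
    have : 0 < Module.finrank ℝ E := by
      rw [finrank_euclideanSpace_fin]; omega
    exact Module.nontrivial_of_finrank_pos this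
  have hdim : Module.finrank ℝ E = k := finrank_euclideanSpace_fin
  have h1 : MeasurePreserving ((homeomorphUnitSphereProd E).toMeasurableEquiv)
      ((volume : Measure E).comap Subtype.val)
      ((volume : Measure E).toSphere.prod
        (Measure.volumeIoiPow (Module.finrank ℝ E - 1))) :=
    ⟨(homeomorphUnitSphereProd E).measurable,
      (volume : Measure E).measurePreserving_homeomorphUnitSphereProd.map_eq⟩
  have h2 := h1.symm (homeomorphUnitSphereProd E).toMeasurableEquiv
  have h3 : MeasurePreserving (Subtype.val : ({0}ᶜ : Set E) → E)
      ((volume : Measure E).comap Subtype.val) volume := by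
    refine ⟨measurable_subtype_coe, ?_⟩
    rw [(MeasurableEmbedding.subtype_coe (measurableSet_singleton (0:E)).compl).map_comap,
      Subtype.range_coe]
    refine Measure.restrict_eq_self_of_ae_mem ?_
    rw [ae_iff]
    have hs : {x : E | ¬ x ∈ ({0}ᶜ : Set E)} = {0} := by ext; simp
    rw [hs]
    exact measure_singleton _
  have key := h3.comp h2
  rw [hdim] at key
  convert key using 1
  funext p
  rfl

theorem lintegral_polar (m : ℕ) (n : Fin m → ℕ) (hn : ∀ i, 1 ≤ n i)
    (F : (∀ i, EuclideanSpace ℝ (Fin (n i))) → ℝ≥0∞) (hF : Measurable F) :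
    ∫⁻ x, F x
      = ∫⁻ r : Fin m → Ioi (0 : ℝ),
          ∫⁻ ξ : ∀ i, Metric.sphere (0 : EuclideanSpace ℝ (Fin (n i))) 1,
            F (fun i => (r i : ℝ) • (ξ i : EuclideanSpace ℝ (Fin (n i))))
            ∂(Measure.pi fun i =>
                (volume : Measure (EuclideanSpace ℝ (Fin (n i)))).toSphere)
          ∂(Measure.pi fun i => Measure.volumeIoiPow (n i - 1)) := by
  have mp1 := fun i => mp_factor (n i) (hn i)
  have mpΦ := measurePreserving_pi
    (fun i => ((volume : Measure (EuclideanSpace ℝ (Fin (n i)))).toSphere).prod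
      (Measure.volumeIoiPow (n i - 1)))
    (fun i => (volume : Measure (EuclideanSpace ℝ (Fin (n i))))) mp1
  have mpE := (measurePreserving_piProd
    (fun i => (volume : Measure (EuclideanSpace ℝ (Fin (n i)))).toSphere)
    (fun i => Measure.volumeIoiPow (n i - 1))).symm piProd
  have h1 : ∫⁻ x, F x = ∫⁻ z, F (fun i => ((z i).2 : ℝ) • ((z i).1 :
      EuclideanSpace ℝ (Fin (n i)))) ∂(Measure.pi fun i =>
        ((volume : Measure (EuclideanSpace ℝ (Fin (n i)))).toSphere).prod
          (Measure.volumeIoiPow (n i - 1))) := by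
    rw [volume_pi]
    exact (mpΦ.lintegral_comp hF).symm
  have h2 := mpE.lintegral_comp
    (f := fun z => F (fun i => ((z i).2 : ℝ) • ((z i).1 : EuclideanSpace ℝ (Fin (n i)))))
    (hF.comp mpΦ.measurable)
  rw [h1, ← h2]
  exact lintegral_prod_symm _ ((hF.comp mpΦ.measurable).comp
    (MeasurableEquiv.measurable _)).aemeasurable

theorem omegaN_pos (k : ℕ) (hk : 1 ≤ k) : 0 < omegaN k := by
  unfold omegaN
  have h2 : 0 < ((k : ℝ) / 2) := by positivity
  have := Real.Gamma_pos_of_pos h2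
  positivity

theorem toSphere_univ (k : ℕ) (hk : 1 ≤ k) :
    (volume : Measure (EuclideanSpace ℝ (Fin k))).toSphere univ
      = ENNReal.ofReal (omegaN k) := by
  haveI : Nonempty (Fin k) := ⟨⟨0, by omega⟩⟩
  rw [Measure.toSphere_apply_univ, EuclideanSpace.volume_ball, finrank_euclideanSpace_fin]
  rw [ENNReal.ofReal_one, one_pow, one_mul]
  rw [show ((k : ℝ≥0∞)) = ENNReal.ofReal (k : ℝ) by simp]
  rw [← ENNReal.ofReal_mul (by positivity)]
  congr 1
  have hk0 : ((k : ℝ) / 2) ≠ 0 := by positivity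
  have hsqrt : Real.sqrt Real.pi ^ (Fintype.card (Fin k))
      = Real.pi ^ ((k : ℝ) / 2) := by
    rw [Fintype.card_fin, Real.sqrt_eq_rpow, ← Real.rpow_natCast (Real.pi ^ ((1:ℝ)/2)) k,
      ← Real.rpow_mul Real.pi_pos.le]
    norm_num
    ring_nf
  rw [Fintype.card_fin] at hsqrt ⊢
  rw [hsqrt, Real.Gamma_add_one hk0]
  have hΓ : 0 < Real.Gamma ((k : ℝ) / 2) := Real.Gamma_pos_of_pos (by positivity)
  unfold omegaN
  field_simp

theorem piSphere_univ (m : ℕ) (n : Fin m → ℕ) (hn : ∀ i, 1 ≤ n i) :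
    (Measure.pi fun i =>
        (volume : Measure (EuclideanSpace ℝ (Fin (n i)))).toSphere) univ
      = ENNReal.ofReal (∏ i, omegaN (n i)) := by
  rw [Measure.pi_univ, ENNReal.ofReal_prod_of_nonneg
    (fun i _ => (omegaN_pos (n i) (hn i)).le)]
  exact Finset.prod_congr rfl fun i _ => toSphere_univ (n i) (hn i)

theorem c_ne_zero (m : ℕ) (n : Fin m → ℕ) (hn : ∀ i, 1 ≤ n i) :
    (ENNReal.ofReal (∏ i, omegaN (n i))) ≠ 0 := by
  rw [Ne, ENNReal.ofReal_eq_zero, not_le]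
  exact Finset.prod_pos fun i _ => omegaN_pos (n i) (hn i)

theorem norm_polar (k : ℕ) (ξ : Metric.sphere (0 : EuclideanSpace ℝ (Fin k)) 1)
    (r : Ioi (0 : ℝ)) : ‖(r : ℝ) • (ξ : EuclideanSpace ℝ (Fin k))‖ = (r : ℝ) := by
  rw [norm_smul, mem_sphere_zero_iff_norm.mp ξ.2, mul_one, Real.norm_eq_abs,
    abs_of_pos r.2]

theorem measurable_sphAvgM (m : ℕ) (n : Fin m → ℕ)
    {f : (∀ i, EuclideanSpace ℝ (Fin (n i))) → ℝ≥0∞} (hf : Measurable f) :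
    Measurable (sphAvgM m n f) := by
  apply Measurable.const_mul
  apply Measurable.lintegral_prod_right'
    (f := fun xξ : (∀ i, EuclideanSpace ℝ (Fin (n i))) ×
        (∀ i, Metric.sphere (0 : EuclideanSpace ℝ (Fin (n i))) 1) =>
      f (fun i => ‖xξ.1 i‖ • (xξ.2 i : EuclideanSpace ℝ (Fin (n i)))))
  apply hf.comp
  apply measurable_pi_lambda _ fun i => ?_
  exact (((measurable_pi_apply i).comp measurable_fst).norm).smul
    (measurable_subtype_coe.comp ((measurable_pi_apply i).comp measurable_snd))

theorem measurableSet_polyBall (m : ℕ) (n : Fin m → ℕ)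
    (x : ∀ i, EuclideanSpace ℝ (Fin (n i))) :
    MeasurableSet {y : ∀ i, EuclideanSpace ℝ (Fin (n i)) | ∀ i, ‖y i‖ < ‖x i‖} := by
  have : {y : ∀ i, EuclideanSpace ℝ (Fin (n i)) | ∀ i, ‖y i‖ < ‖x i‖}
      = ⋂ i, {y | ‖y i‖ < ‖x i‖} := by ext y; simp
  rw [this]
  exact MeasurableSet.iInter fun i =>
    measurableSet_lt ((measurable_pi_apply i).norm) measurable_const

theorem setLIntegral_polar (m : ℕ) (n : Fin m → ℕ) (hn : ∀ i, 1 ≤ n i)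
    (g : (∀ i, EuclideanSpace ℝ (Fin (n i))) → ℝ≥0∞) (hg : Measurable g)
    (x : ∀ i, EuclideanSpace ℝ (Fin (n i))) :
    ∫⁻ y in {y : ∀ i, EuclideanSpace ℝ (Fin (n i)) | ∀ i, ‖y i‖ < ‖x i‖}, g y
      = ∫⁻ r : Fin m → Ioi (0 : ℝ),
          (if ∀ i, (r i : ℝ) < ‖x i‖ then
            ∫⁻ ξ : ∀ i, Metric.sphere (0 : EuclideanSpace ℝ (Fin (n i))) 1,
              g (fun i => (r i : ℝ) • (ξ i : EuclideanSpace ℝ (Fin (n i))))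
              ∂(Measure.pi fun i =>
                (volume : Measure (EuclideanSpace ℝ (Fin (n i)))).toSphere)
          else 0)
          ∂(Measure.pi fun i => Measure.volumeIoiPow (n i - 1)) := by
  classical
  rw [← lintegral_indicator (measurableSet_polyBall m n x)]
  rw [lintegral_polar m n hn _ (hg.indicator (measurableSet_polyBall m n x))]
  refine lintegral_congr fun r => ?_
  by_cases hc : ∀ i, (r i : ℝ) < ‖x i‖
  · rw [if_pos hc]
    refine lintegral_congr fun ξ => ?_
    refine Set.indicator_of_mem ?_ g
    simpa only [Set.mem_setOf_eq, norm_polar] using hc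
  · rw [if_neg hc]
    have : ∀ ξ : ∀ i, Metric.sphere (0 : EuclideanSpace ℝ (Fin (n i))) 1,
        Set.indicator {y : ∀ i, EuclideanSpace ℝ (Fin (n i)) | ∀ i, ‖y i‖ < ‖x i‖} g
          (fun i => (r i : ℝ) • (ξ i : EuclideanSpace ℝ (Fin (n i)))) = 0 := by
      intro ξ
      refine Set.indicator_of_notMem ?_ g
      simpa only [Set.mem_setOf_eq, norm_polar] using hc
    simp only [this, lintegral_zero]

theorem sphAvg_polar_eval (m : ℕ) (n : Fin m → ℕ)
    (f : (∀ i, EuclideanSpace ℝ (Fin (n i))) → ℝ≥0∞)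
    (r : Fin m → Ioi (0 : ℝ))
    (ξ : ∀ i, Metric.sphere (0 : EuclideanSpace ℝ (Fin (n i))) 1) :
    sphAvgM m n f (fun i => (r i : ℝ) • (ξ i : EuclideanSpace ℝ (Fin (n i))))
      = (ENNReal.ofReal (∏ i, omegaN (n i)))⁻¹ *
        ∫⁻ η : ∀ i, Metric.sphere (0 : EuclideanSpace ℝ (Fin (n i))) 1,
          f (fun i => (r i : ℝ) • (η i : EuclideanSpace ℝ (Fin (n i))))
          ∂(Measure.pi fun i =>
            (volume : Measure (EuclideanSpace ℝ (Fin (n i)))).toSphere) := by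
  unfold sphAvgM
  congr 1
  refine lintegral_congr fun η => ?_
  congr 1
  funext i
  rw [norm_polar]

theorem aux_cancel (c J : ℝ≥0∞) (hc0 : c ≠ 0) (hct : c ≠ ⊤) :
    (c⁻¹ * J) * c = J := by
  rw [mul_right_comm, ENNReal.inv_mul_cancel hc0 hct, one_mul]

theorem setLIntegral_sphAvg (m : ℕ) (n : Fin m → ℕ) (hn : ∀ i, 1 ≤ n i)
    (f : (∀ i, EuclideanSpace ℝ (Fin (n i))) → ℝ≥0∞) (hf : Measurable f)
    (x : ∀ i, EuclideanSpace ℝ (Fin (n i))) :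
    ∫⁻ y in {y : ∀ i, EuclideanSpace ℝ (Fin (n i)) | ∀ i, ‖y i‖ < ‖x i‖},
        sphAvgM m n f y
      = ∫⁻ y in {y : ∀ i, EuclideanSpace ℝ (Fin (n i)) | ∀ i, ‖y i‖ < ‖x i‖}, f y := by
  classical
  have hc0 : (ENNReal.ofReal (∏ i, omegaN (n i))) ≠ 0 := c_ne_zero m n hn
  have hct : (ENNReal.ofReal (∏ i, omegaN (n i))) ≠ ⊤ := ENNReal.ofReal_ne_top
  rw [setLIntegral_polar m n hn _ (measurable_sphAvgM m n hf) x,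
    setLIntegral_polar m n hn _ hf x]
  refine lintegral_congr fun r => ?_
  by_cases hcond : ∀ i, (r i : ℝ) < ‖x i‖
  · rw [if_pos hcond, if_pos hcond]
    have h1 : (∫⁻ ξ : ∀ i, Metric.sphere (0 : EuclideanSpace ℝ (Fin (n i))) 1,
        sphAvgM m n f (fun i => (r i : ℝ) • (ξ i : EuclideanSpace ℝ (Fin (n i))))
        ∂(Measure.pi fun i =>
          (volume : Measure (EuclideanSpace ℝ (Fin (n i)))).toSphere))
        = ∫⁻ _ξ : ∀ i, Metric.sphere (0 : EuclideanSpace ℝ (Fin (n i))) 1,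
            ((ENNReal.ofReal (∏ i, omegaN (n i)))⁻¹ *
              ∫⁻ η : ∀ i, Metric.sphere (0 : EuclideanSpace ℝ (Fin (n i))) 1,
                f (fun i => (r i : ℝ) • (η i : EuclideanSpace ℝ (Fin (n i))))
                ∂(Measure.pi fun i =>
                  (volume : Measure (EuclideanSpace ℝ (Fin (n i)))).toSphere))
            ∂(Measure.pi fun i =>
              (volume : Measure (EuclideanSpace ℝ (Fin (n i)))).toSphere) :=
      lintegral_congr fun ξ => sphAvg_polar_eval m n f r ξ
    rw [h1, lintegral_const, piSphere_univ m n hn]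
    exact aux_cancel _ _ hc0 hct
  · rw [if_neg hcond, if_neg hcond]

theorem prodFracHardy_sphAvg (m : ℕ) (n : Fin m → ℕ) (hn : ∀ i, 1 ≤ n i)
    (β : Fin m → ℝ) (f : (∀ i, EuclideanSpace ℝ (Fin (n i))) → ℝ≥0∞)
    (hf : Measurable f) :
    prodFracHardy m n β (sphAvgM m n f) = prodFracHardy m n β f := by
  funext x
  unfold prodFracHardy
  rw [setLIntegral_sphAvg m n hn f hf x]

theorem jensen_aux {p : ℝ} (hp : 1 ≤ p) (c J1 Jp W : ℝ≥0∞)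
    (hc0 : c ≠ 0) (hct : c ≠ ⊤)
    (hJ : p = 1 → J1 = Jp)
    (holder : 1 < p → J1 ≤ Jp ^ (1/p) * c ^ (1 / Real.conjExponent p)) :
    (c⁻¹ * J1) ^ p * W * c ≤ Jp * W := by
  have hp0 : (0:ℝ) < p := lt_of_lt_of_le one_pos hp
  have key : (c⁻¹ * J1) ^ p * c ≤ Jp := by
    rcases eq_or_lt_of_le hp with hp1 | hp1
    · rw [← hp1, ENNReal.rpow_one, aux_cancel c J1 hc0 hct, hJ hp1.symm]
    · have hconj : p.HolderConjugate (Real.conjExponent p) :=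
        Real.HolderConjugate.conjExponent hp1
      have hq' : (1 / Real.conjExponent p) * p = p - 1 := by
        rw [div_mul_eq_mul_div, one_mul, hconj.div_conj_eq_sub_one]
      have hstep : c ^ (p - 1) * c = c ^ p := by
        nth_rewrite 2 [← ENNReal.rpow_one c]
        rw [← ENNReal.rpow_add _ _ hc0 hct, sub_add_cancel]
      calc (c⁻¹ * J1) ^ p * c
          ≤ (c⁻¹ * (Jp ^ (1/p) * c ^ (1 / Real.conjExponent p))) ^ p * c := by
            gcongr
            exact holder hp1
        _ = Jp * ((c ^ p)⁻¹ * (c ^ (p - 1) * c)) := by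
            rw [ENNReal.mul_rpow_of_nonneg _ _ hp0.le,
              ENNReal.mul_rpow_of_nonneg _ _ hp0.le,
              ENNReal.inv_rpow, ← ENNReal.rpow_mul, ← ENNReal.rpow_mul,
              one_div_mul_cancel hp0.ne', ENNReal.rpow_one, hq']
            ring
        _ = Jp := by
            rw [hstep, ENNReal.inv_mul_cancel
              (by simpa using (ENNReal.rpow_pos (pos_iff_ne_zero.mpr hc0) hct).ne')
              (ENNReal.rpow_ne_top_of_nonneg hp0.le hct), mul_one]
  calc (c⁻¹ * J1) ^ p * W * c = ((c⁻¹ * J1) ^ p * c) * W := by ring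
    _ ≤ Jp * W := by gcongr

theorem denom_le (m : ℕ) (n : Fin m → ℕ) (hn : ∀ i, 1 ≤ n i) (γ : Fin m → ℝ)
    {p : ℝ} (hp : 1 ≤ p)
    (f : (∀ i, EuclideanSpace ℝ (Fin (n i))) → ℝ≥0∞) (hf : Measurable f) :
    ∫⁻ x, sphAvgM m n f x ^ p * ENNReal.ofReal (∏ i, ‖x i‖ ^ γ i)
      ≤ ∫⁻ x, f x ^ p * ENNReal.ofReal (∏ i, ‖x i‖ ^ γ i) := by
  have hc0 : (ENNReal.ofReal (∏ i, omegaN (n i))) ≠ 0 := c_ne_zero m n hn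
  have hct : (ENNReal.ofReal (∏ i, omegaN (n i))) ≠ ⊤ := ENNReal.ofReal_ne_top
  have hp0 : (0:ℝ) < p := lt_of_lt_of_le one_pos hp
  have hw : Measurable fun x : ∀ i, EuclideanSpace ℝ (Fin (n i)) =>
      ENNReal.ofReal (∏ i, ‖x i‖ ^ γ i) := by
    apply ENNReal.measurable_ofReal.comp
    exact Finset.measurable_prod _ fun i _ =>
      ((measurable_pi_apply i).norm).pow measurable_const
  rw [lintegral_polar m n hn (fun x => sphAvgM m n f x ^ p * ENNReal.ofReal (∏ i, ‖x i‖ ^ γ i))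
    (((measurable_sphAvgM m n hf).pow measurable_const).mul hw),
    lintegral_polar m n hn (fun x => f x ^ p * ENNReal.ofReal (∏ i, ‖x i‖ ^ γ i)) ((hf.pow measurable_const).mul hw)]
  refine lintegral_mono fun r => ?_
  have hWnorm : ∀ ξ : ∀ i, Metric.sphere (0 : EuclideanSpace ℝ (Fin (n i))) 1,
      ENNReal.ofReal (∏ i, ‖(r i : ℝ) • (ξ i : EuclideanSpace ℝ (Fin (n i)))‖ ^ γ i)
        = ENNReal.ofReal (∏ i, ((r i : ℝ)) ^ γ i) := by
    intro ξ
    congr 1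
    exact Finset.prod_congr rfl fun i _ => by rw [norm_polar]
  have hmeas : Measurable fun ξ : ∀ i,
      Metric.sphere (0 : EuclideanSpace ℝ (Fin (n i))) 1 =>
      f (fun i => (r i : ℝ) • (ξ i : EuclideanSpace ℝ (Fin (n i)))) := by
    apply hf.comp
    exact measurable_pi_lambda _ fun i => Measurable.smul (f := fun _ => (r i : ℝ))
      (g := fun c : (∀ i, Metric.sphere (0 : EuclideanSpace ℝ (Fin (n i))) 1) =>
        ((c i : EuclideanSpace ℝ (Fin (n i))))) measurable_const
      (measurable_subtype_coe.comp (measurable_pi_apply i))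
  have hLHS : (∫⁻ ξ : ∀ i, Metric.sphere (0 : EuclideanSpace ℝ (Fin (n i))) 1,
      sphAvgM m n f (fun i => (r i : ℝ) • (ξ i : EuclideanSpace ℝ (Fin (n i)))) ^ p *
        ENNReal.ofReal (∏ i, ‖(r i : ℝ) • (ξ i : EuclideanSpace ℝ (Fin (n i)))‖ ^ γ i)
        ∂(Measure.pi fun i =>
          (volume : Measure (EuclideanSpace ℝ (Fin (n i)))).toSphere))
      = (((ENNReal.ofReal (∏ i, omegaN (n i)))⁻¹ *
          ∫⁻ η : ∀ i, Metric.sphere (0 : EuclideanSpace ℝ (Fin (n i))) 1,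
            f (fun i => (r i : ℝ) • (η i : EuclideanSpace ℝ (Fin (n i))))
            ∂(Measure.pi fun i =>
              (volume : Measure (EuclideanSpace ℝ (Fin (n i)))).toSphere)) ^ p *
          ENNReal.ofReal (∏ i, ((r i : ℝ)) ^ γ i)) *
        ENNReal.ofReal (∏ i, omegaN (n i)) := by
    have h1 : (∫⁻ ξ : ∀ i, Metric.sphere (0 : EuclideanSpace ℝ (Fin (n i))) 1,
        sphAvgM m n f (fun i => (r i : ℝ) • (ξ i : EuclideanSpace ℝ (Fin (n i)))) ^ p *
          ENNReal.ofReal (∏ i, ‖(r i : ℝ) • (ξ i : EuclideanSpace ℝ (Fin (n i)))‖ ^ γ i)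
          ∂(Measure.pi fun i =>
            (volume : Measure (EuclideanSpace ℝ (Fin (n i)))).toSphere))
        = ∫⁻ _ξ : ∀ i, Metric.sphere (0 : EuclideanSpace ℝ (Fin (n i))) 1,
            (((ENNReal.ofReal (∏ i, omegaN (n i)))⁻¹ *
              ∫⁻ η : ∀ i, Metric.sphere (0 : EuclideanSpace ℝ (Fin (n i))) 1,
                f (fun i => (r i : ℝ) • (η i : EuclideanSpace ℝ (Fin (n i))))
                ∂(Measure.pi fun i =>
                  (volume : Measure (EuclideanSpace ℝ (Fin (n i)))).toSphere)) ^ p *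
              ENNReal.ofReal (∏ i, ((r i : ℝ)) ^ γ i))
            ∂(Measure.pi fun i =>
              (volume : Measure (EuclideanSpace ℝ (Fin (n i)))).toSphere) :=
      lintegral_congr fun ξ => by rw [sphAvg_polar_eval m n f r ξ, hWnorm ξ]
    rw [h1, lintegral_const, piSphere_univ m n hn]
  have hRHS : (∫⁻ ξ : ∀ i, Metric.sphere (0 : EuclideanSpace ℝ (Fin (n i))) 1,
      f (fun i => (r i : ℝ) • (ξ i : EuclideanSpace ℝ (Fin (n i)))) ^ p *
        ENNReal.ofReal (∏ i, ‖(r i : ℝ) • (ξ i : EuclideanSpace ℝ (Fin (n i)))‖ ^ γ i)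
        ∂(Measure.pi fun i =>
          (volume : Measure (EuclideanSpace ℝ (Fin (n i)))).toSphere))
      = (∫⁻ η : ∀ i, Metric.sphere (0 : EuclideanSpace ℝ (Fin (n i))) 1,
          f (fun i => (r i : ℝ) • (η i : EuclideanSpace ℝ (Fin (n i)))) ^ p
          ∂(Measure.pi fun i =>
            (volume : Measure (EuclideanSpace ℝ (Fin (n i)))).toSphere)) *
        ENNReal.ofReal (∏ i, ((r i : ℝ)) ^ γ i) := by
    rw [← lintegral_mul_const' _ _ (ENNReal.ofReal_ne_top)]
    exact lintegral_congr fun ξ => by rw [hWnorm ξ]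
  rw [hLHS, hRHS]
  refine jensen_aux hp _ _ _ _ hc0 hct (fun hp1 => ?_) (fun hp1 => ?_)
  · subst hp1
    exact lintegral_congr fun η => (ENNReal.rpow_one _).symm
  · have hconj : p.HolderConjugate (Real.conjExponent p) :=
      Real.HolderConjugate.conjExponent hp1
    have holder := ENNReal.lintegral_mul_le_Lp_mul_Lq
      (Measure.pi fun i =>
        (volume : Measure (EuclideanSpace ℝ (Fin (n i)))).toSphere) hconj
      hmeas.aemeasurable aemeasurable_const
      (g := fun _ => (1 : ℝ≥0∞))
    simpa only [Pi.mul_apply, mul_one, ENNReal.one_rpow, lintegral_one,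
      piSphere_univ m n hn] using holder

end RadialAux

open RadialAux

/-- The operator norm of `𝓗_{β₁,…,β_m}` from `L^p(|x|^γ)` to `L^q(|x|^α)` is attained on
radial functions: the ratio for `f` is dominated by the ratio for the spherical average
of `f`, and the supremum of the ratios over all functions equals the supremum over
radial functions. -/
theorem radial_reduction (m : ℕ) (hm : 1 ≤ m) (n : Fin m → ℕ) (hn : ∀ i, 1 ≤ n i)
    (β α γ : Fin m → ℝ) (p q : ℝ) (hp : 1 ≤ p) (hpq : p < q)
    (hβ0 : ∀ i, 0 ≤ β i) (hβn : ∀ i, β i < n i) :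
    (∀ f : (∀ i, EuclideanSpace ℝ (Fin (n i))) → ℝ≥0∞, Measurable f →
      hardyRatio m n β α γ p q f ≤ hardyRatio m n β α γ p q (sphAvgM m n f)) ∧
    (⨆ f : {f : (∀ i, EuclideanSpace ℝ (Fin (n i))) → ℝ≥0∞ // Measurable f},
        hardyRatio m n β α γ p q f.1
      = ⨆ f : {f : (∀ i, EuclideanSpace ℝ (Fin (n i))) → ℝ≥0∞ //
          Measurable f ∧ ∃ h : (Fin m → ℝ) → ℝ≥0∞, ∀ x, f x = h fun i => ‖x i‖},
        hardyRatio m n β α γ p q f.1) := by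

  have part1 : ∀ f : (∀ i, EuclideanSpace ℝ (Fin (n i))) → ℝ≥0∞, Measurable f →
      hardyRatio m n β α γ p q f ≤ hardyRatio m n β α γ p q (sphAvgM m n f) := by
    intro f hf
    unfold hardyRatio
    rw [prodFracHardy_sphAvg m n hn β f hf]
    refine ENNReal.div_le_div_left ?_ _
    exact ENNReal.rpow_le_rpow (denom_le m n hn γ hp f hf)
      (div_nonneg zero_le_one (le_trans zero_le_one hp))
  refine ⟨part1, le_antisymm ?_ ?_⟩
  · refine iSup_le fun f => le_trans (part1 f.1 f.2) ?_
    exact le_iSup_of_le ⟨sphAvgM m n f.1, measurable_sphAvgM m n f.2,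
      ⟨fun v => (ENNReal.ofReal (∏ i, omegaN (n i)))⁻¹ *
        ∫⁻ ξ : ∀ i, Metric.sphere (0 : EuclideanSpace ℝ (Fin (n i))) 1,
          f.1 (fun i => v i • (ξ i : EuclideanSpace ℝ (Fin (n i))))
          ∂(Measure.pi fun i =>
            (volume : Measure (EuclideanSpace ℝ (Fin (n i)))).toSphere),
        fun x => rfl⟩⟩ le_rfl
  · exact iSup_le fun f => le_iSup_of_le ⟨f.1, f.2.1⟩ le_rfl
end

section
/- Fix n ≥ 1, 1 < p < ∞ and γ < n(p-1), and for q ∈ (p,∞) set (α+n)/q = (γ+n)/p and C*_{pq} = |S^{n-1}|^{1/q-1/p} n^{1/p-1/q} (n(p-1)/(n(p-1)-γ))^{1/p'+1/q} (p'/q)^{1/q} ((p/(q-p)) B(p/(q-p), pq/(q'(q-p))))^{1/q-1/p}. Then C*_{pq} → p/(p-1-γ/n) as q → p⁺. -/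
open MeasureTheory Set Filter
open scoped ENNReal Topology

lemma betaFn_integrableOn {z w : ℝ} (hz : 1 < z) (hw : 1 < w) :
    IntegrableOn (fun t : ℝ => t ^ (z - 1) * (1 - t) ^ (w - 1)) (Ioo (0 : ℝ) 1) := by
  have hc : Continuous fun t : ℝ => t ^ (z - 1) * (1 - t) ^ (w - 1) := by
    exact (Real.continuous_rpow_const (by linarith)).mul
      ((Real.continuous_rpow_const (by linarith)).comp (continuous_const.sub continuous_id))
  exact (hc.integrableOn_Icc (a := 0) (b := 1)).mono_set Ioo_subset_Icc_self

lemma rpow_mul_rpow_le {t α β : ℝ} (ht0 : 0 < t) (ht1 : t < 1) (hα : 0 < α) (hβ : 0 < β) :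
    t ^ α * (1 - t) ^ β ≤ (α / (α + β)) ^ α * (β / (α + β)) ^ β := by
  have hs : 0 < α + β := by linarith
  have h1t : 0 < 1 - t := by linarith
  rw [Real.rpow_def_of_pos ht0, Real.rpow_def_of_pos h1t,
    Real.rpow_def_of_pos (by positivity : (0:ℝ) < α / (α + β)),
    Real.rpow_def_of_pos (by positivity : (0:ℝ) < β / (α + β)),
    ← Real.exp_add, ← Real.exp_add, Real.exp_le_exp]
  have k1 : Real.log t + Real.log ((α + β) / α) ≤ t * ((α + β) / α) - 1 := by
    have := Real.log_le_sub_one_of_pos (show 0 < t * ((α + β) / α) by positivity)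
    rwa [Real.log_mul (ne_of_gt ht0) (by positivity)] at this
  have k2 : Real.log (1 - t) + Real.log ((α + β) / β) ≤ (1 - t) * ((α + β) / β) - 1 := by
    have := Real.log_le_sub_one_of_pos (show 0 < (1 - t) * ((α + β) / β) by positivity)
    rwa [Real.log_mul (ne_of_gt h1t) (by positivity)] at this
  have l1 : Real.log ((α + β) / α) = - Real.log (α / (α + β)) := by
    rw [show (α + β) / α = (α / (α + β))⁻¹ by rw [inv_div], Real.log_inv]
  have l2 : Real.log ((α + β) / β) = - Real.log (β / (α + β)) := by
    rw [show (α + β) / β = (β / (α + β))⁻¹ by rw [inv_div], Real.log_inv]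
  rw [l1] at k1; rw [l2] at k2
  have m1 := mul_le_mul_of_nonneg_right k1 hα.le
  have m2 := mul_le_mul_of_nonneg_right k2 hβ.le
  have e1 : t * ((α + β) / α) * α = t * (α + β) := by field_simp
  have e2 : (1 - t) * ((α + β) / β) * β = (1 - t) * (α + β) := by field_simp
  linarith [m1, m2, e1, e2]

lemma betaFn_le {z w : ℝ} (hz : 1 < z) (hw : 1 < w) :
    betaFn z w ≤ ((z - 1) / (z + w - 2)) ^ (z - 1) * ((w - 1) / (z + w - 2)) ^ (w - 1) := by
  have hα : 0 < z - 1 := by linarith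
  have hβ : 0 < w - 1 := by linarith
  have hInt := betaFn_integrableOn hz hw
  have key : betaFn z w ≤ ∫ _ in Ioo (0:ℝ) 1,
      ((z - 1) / (z + w - 2)) ^ (z - 1) * ((w - 1) / (z + w - 2)) ^ (w - 1) := by
    refine setIntegral_mono_on hInt ?_ measurableSet_Ioo ?_
    · exact integrableOn_const (by simp [Real.volume_Ioo])
    · intro t ht
      have := rpow_mul_rpow_le ht.1 ht.2 hα hβ
      have e : z - 1 + (w - 1) = z + w - 2 := by ring
      rwa [e] at this
  calc betaFn z w ≤ _ := key
    _ = ((z - 1) / (z + w - 2)) ^ (z - 1) * ((w - 1) / (z + w - 2)) ^ (w - 1) := by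
        rw [setIntegral_const]; simp [Real.volume_Ioo]

lemma le_betaFn {z w u v : ℝ} (hz : 1 < z) (hw : 1 < w) (hu : 0 < u) (huv : u < v)
    (hv : v < 1) :
    (v - u) * (u ^ (z - 1) * (1 - v) ^ (w - 1)) ≤ betaFn z w := by
  have hInt := betaFn_integrableOn hz hw
  have hsub : Ioo u v ⊆ Ioo (0:ℝ) 1 := Ioo_subset_Ioo hu.le hv.le
  have h1 : (∫ t in Ioo u v, t ^ (z - 1) * (1 - t) ^ (w - 1)) ≤ betaFn z w := by
    refine setIntegral_mono_set hInt ?_ (HasSubset.Subset.eventuallyLE hsub)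
    · refine (ae_restrict_iff' measurableSet_Ioo).2 (Filter.Eventually.of_forall ?_)
      intro t ht
      exact mul_nonneg (Real.rpow_nonneg ht.1.le _)
        (Real.rpow_nonneg (by linarith [ht.2] : (0:ℝ) ≤ 1 - t) _)
  refine le_trans ?_ h1
  have h2 : (v - u) * (u ^ (z - 1) * (1 - v) ^ (w - 1))
      = ∫ _ in Ioo u v, u ^ (z - 1) * (1 - v) ^ (w - 1) := by
    rw [setIntegral_const]
    simp [Real.volume_Ioo, ENNReal.toReal_ofReal (by linarith : (0:ℝ) ≤ v - u), smul_eq_mul]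
    exact Or.inl huv.le
  rw [h2]
  refine setIntegral_mono_on ?_ (hInt.mono_set hsub) measurableSet_Ioo ?_
  · exact integrableOn_const (by simp [Real.volume_Ioo])
  · intro t ht
    have h1v : (0:ℝ) ≤ 1 - v := by linarith
    refine mul_le_mul (Real.rpow_le_rpow hu.le ht.1.le (by linarith))
      (Real.rpow_le_rpow h1v (by linarith [ht.2]) (by linarith))
      (Real.rpow_nonneg h1v _) (Real.rpow_nonneg (by linarith [ht.1] : (0:ℝ) ≤ t) _)

section
variable {p q : ℝ} (hp : 1 < p) (hq : p < q) (h2 : q < 2 * p)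
include hp hq h2

lemma basic_facts :
    1 < p / (q - p) ∧ 1 < (q - 1) * (p / (q - p)) ∧ 0 < p * q - 2 * q + 2 * p ∧
      0 < betaFn (p / (q - p)) ((q - 1) * (p / (q - p))) := by
  have hqp : 0 < q - p := by linarith
  have hp0 : 0 < p := by linarith
  have hq0 : 0 < q := by linarith
  have hz : 1 < p / (q - p) := (one_lt_div hqp).2 (by linarith)
  have hw : 1 < (q - 1) * (p / (q - p)) := by
    rw [mul_div_assoc']
    exact (one_lt_div hqp).2 (by nlinarith)
  have hD : 0 < p * q - 2 * q + 2 * p := by nlinarith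
  refine ⟨hz, hw, hD, ?_⟩
  have hu : (0:ℝ) < 1 / (2 * p) := by positivity
  have huv : 1 / (2 * p) < 1 / p := by
    rw [div_lt_div_iff₀ (by positivity) hp0]; nlinarith
  have hv : 1 / p < 1 := by rw [div_lt_one hp0]; linarith
  refine lt_of_lt_of_le ?_ (le_betaFn hz hw hu huv hv)
  have h1 : (0:ℝ) < 1 / p - 1 / (2 * p) := by linarith
  have h2' : (0:ℝ) < 1 - 1 / p := by linarith
  positivity

lemma TermB_ge :
    -((2 * p - q) / (p * q)) * Real.log ((2 * p - q) / (p * q - 2 * q + 2 * p))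
        - ((p - 1) / p) * Real.log (q * (p - 1) / (p * q - 2 * q + 2 * p))
      ≤ (1 / q - 1 / p) * Real.log (betaFn (p / (q - p)) ((q - 1) * (p / (q - p)))) := by
  obtain ⟨hz, hw, hD, hBpos⟩ := basic_facts hp hq h2
  have hqp : 0 < q - p := by linarith
  have hp0 : 0 < p := by linarith
  have hq0 : 0 < q := by linarith
  set z := p / (q - p) with hzdef
  set w := (q - 1) * (p / (q - p)) with hwdef
  have hzz : z - 1 = (2 * p - q) / (q - p) := by
    rw [hzdef]; field_simp; ring
  have hww : w - 1 = q * (p - 1) / (q - p) := by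
    rw [hwdef]; field_simp; ring
  have hs : z + w - 2 = (p * q - 2 * q + 2 * p) / (q - p) := by
    rw [hzdef, hwdef]; field_simp; ring
  have hr1 : (z - 1) / (z + w - 2) = (2 * p - q) / (p * q - 2 * q + 2 * p) := by
    have h1 : q - p ≠ 0 := by linarith
    have h2' : p * q - 2 * q + 2 * p ≠ 0 := ne_of_gt hD
    rw [hzz, hs]
    field_simp
  have hr2 : (w - 1) / (z + w - 2) = q * (p - 1) / (p * q - 2 * q + 2 * p) := by
    have h1 : q - p ≠ 0 := by linarith
    have h2' : p * q - 2 * q + 2 * p ≠ 0 := ne_of_gt hD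
    rw [hww, hs]
    field_simp
  have hM := betaFn_le hz hw
  rw [hr1, hr2, hzz, hww] at hM
  have hr1p : (0:ℝ) < (2 * p - q) / (p * q - 2 * q + 2 * p) := by
    apply div_pos (by linarith) hD
  have hr2p : (0:ℝ) < q * (p - 1) / (p * q - 2 * q + 2 * p) := by
    apply div_pos (by nlinarith) hD
  have hlog : Real.log (betaFn z w)
      ≤ ((2 * p - q) / (q - p)) * Real.log ((2 * p - q) / (p * q - 2 * q + 2 * p))
        + (q * (p - 1) / (q - p)) * Real.log (q * (p - 1) / (p * q - 2 * q + 2 * p)) := by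
    calc Real.log (betaFn z w) ≤ Real.log (((2 * p - q) / (p * q - 2 * q + 2 * p)) ^ ((2 * p - q) / (q - p)) *
          (q * (p - 1) / (p * q - 2 * q + 2 * p)) ^ (q * (p - 1) / (q - p))) :=
        Real.log_le_log hBpos hM
      _ = _ := by
        rw [Real.log_mul (by positivity) (by positivity), Real.log_rpow hr1p, Real.log_rpow hr2p]
  have hneg : 1 / q - 1 / p ≤ 0 := by
    rw [sub_nonpos, div_le_div_iff₀ hq0 hp0]; nlinarith
  have := mul_le_mul_of_nonpos_left hlog hneg
  refine le_trans (le_of_eq ?_) this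
  have h1 : 1 / q - 1 / p = -((q - p) / (p * q)) := by
    rw [div_sub_div _ _ (ne_of_gt hq0) (ne_of_gt hp0), ← neg_div, mul_comm q p]
    congr 1
    ring
  rw [h1]
  set L1 := Real.log ((2 * p - q) / (p * q - 2 * q + 2 * p))
  set L2 := Real.log (q * (p - 1) / (p * q - 2 * q + 2 * p))
  have hpq : p - q ≠ 0 := by linarith
  field_simp
  ring

lemma TermB_le {u : ℝ} (hu : 0 < u) (huv : u < 1 / p) :
    (1 / q - 1 / p) * Real.log (betaFn (p / (q - p)) ((q - 1) * (p / (q - p))))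
      ≤ -((q - p) / (p * q)) * Real.log (1 / p - u)
        - ((2 * p - q) / (p * q)) * Real.log u - ((p - 1) / p) * Real.log ((p - 1) / p) := by
  obtain ⟨hz, hw, hD, hBpos⟩ := basic_facts hp hq h2
  have hqp : 0 < q - p := by linarith
  have hp0 : 0 < p := by linarith
  have hq0 : 0 < q := by linarith
  set z := p / (q - p) with hzdef
  set w := (q - 1) * (p / (q - p)) with hwdef
  have hzz : z - 1 = (2 * p - q) / (q - p) := by
    rw [hzdef]; field_simp; ring
  have hww : w - 1 = q * (p - 1) / (q - p) := by
    rw [hwdef]; field_simp; ring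
  have hv : 1 / p < 1 := by rw [div_lt_one hp0]; linarith
  have h1p : (1:ℝ) - 1 / p = (p - 1) / p := by field_simp
  have hlb := le_betaFn (u := u) (v := 1 / p) hz hw hu huv hv
  rw [h1p] at hlb
  have hppos : (0:ℝ) < (p - 1) / p := by
    apply div_pos (by linarith) hp0
  have hLpos : (0:ℝ) < (1 / p - u) * (u ^ (z - 1) * ((p - 1) / p) ^ (w - 1)) := by
    have h0 : (0:ℝ) < 1 / p - u := by linarith
    have := Real.rpow_pos_of_pos hu (z - 1)
    have := Real.rpow_pos_of_pos hppos (w - 1)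
    positivity
  have hlog : Real.log (1 / p - u) + ((z - 1) * Real.log u + (w - 1) * Real.log ((p - 1) / p))
      ≤ Real.log (betaFn z w) := by
    have := Real.log_le_log hLpos hlb
    rwa [Real.log_mul (by linarith : 1 / p - u ≠ 0)
        (by positivity : u ^ (z - 1) * ((p - 1) / p) ^ (w - 1) ≠ 0),
      Real.log_mul (by positivity) (by positivity),
      Real.log_rpow hu, Real.log_rpow hppos] at this
  have hneg : 1 / q - 1 / p ≤ 0 := by
    rw [sub_nonpos, div_le_div_iff₀ hq0 hp0]; nlinarith
  have := mul_le_mul_of_nonpos_left hlog hneg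
  refine le_trans this (le_of_eq ?_)
  have h1 : 1 / q - 1 / p = -((q - p) / (p * q)) := by
    rw [div_sub_div _ _ (ne_of_gt hq0) (ne_of_gt hp0), ← neg_div, mul_comm q p]
    congr 1
    ring
  rw [h1, hzz, hww]
  set L1 := Real.log (1 / p - u)
  set L2 := Real.log u
  set L3 := Real.log ((p - 1) / p)
  have hpq : p - q ≠ 0 := by linarith
  field_simp
  ring

end
set_option maxHeartbeats 2000000 in
/-- The sharp constant `C*_{pq}` tends to `p/(p-1-γ/n)` as `q → p⁺`. -/
theorem sharp_constant_limit (n : ℕ) (hn : 1 ≤ n) (p γ : ℝ)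
    (hp : 1 < p) (hγ : γ < n * (p - 1)) :
    Tendsto (fun q : ℝ =>
        (omegaN n) ^ (1 / q - 1 / p) * (n : ℝ) ^ (1 / p - 1 / q) *
          ((n * (p - 1)) / (n * (p - 1) - γ)) ^ ((1 - 1 / p) + 1 / q) *
          ((p / (p - 1)) / q) ^ (1 / q) *
          ((p / (q - p)) *
            betaFn (p / (q - p)) (p * q / ((q / (q - 1)) * (q - p)))) ^ (1 / q - 1 / p))
      (𝓝[>] p) (𝓝 (p / (p - 1 - γ / n))) := by
  have hn0 : (0:ℝ) < n := by exact_mod_cast hn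
  have hp0 : (0:ℝ) < p := by linarith
  have hp1 : (0:ℝ) < p - 1 := by linarith
  have hK : (0:ℝ) < n * (p - 1) - γ := by linarith
  have hK3 : (0:ℝ) < (n * (p - 1)) / (n * (p - 1) - γ) := by positivity
  set l := 𝓝[>] p with hldef
  have hev : ∀ᶠ q in l, q ∈ Ioo p (2 * p) :=
    Ioo_mem_nhdsGT_of_mem ⟨le_refl p, by linarith⟩
  have hqid : Tendsto (fun q : ℝ => q) l (𝓝 p) := tendsto_id.mono_left nhdsWithin_le_nhds
  have hinvq : Tendsto (fun q : ℝ => 1 / q) l (𝓝 (1 / p)) :=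
    tendsto_const_nhds.div hqid (ne_of_gt hp0)
  have he0 : Tendsto (fun q : ℝ => 1 / q - 1 / p) l (𝓝 0) := by
    have := hinvq.sub (tendsto_const_nhds (x := 1 / p))
    simpa using this
  have he0' : Tendsto (fun q : ℝ => 1 / p - 1 / q) l (𝓝 0) := by
    have := (tendsto_const_nhds (x := 1 / p)).sub hinvq
    simpa using this
  -- factor 1
  have hω : (0:ℝ) < omegaN n := by
    unfold omegaN
    have h1 : 0 < Real.Gamma ((n:ℝ) / 2) := Real.Gamma_pos_of_pos (by positivity)
    positivity
  have h1 : Tendsto (fun q : ℝ => omegaN n ^ (1 / q - 1 / p)) l (𝓝 1) := by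
    have := (tendsto_const_nhds (x := omegaN n)).rpow he0 (Or.inl (ne_of_gt hω))
    simpa using this
  -- factor 2
  have h2 : Tendsto (fun q : ℝ => (n : ℝ) ^ (1 / p - 1 / q)) l (𝓝 1) := by
    have := (tendsto_const_nhds (x := (n:ℝ))).rpow he0' (Or.inl (ne_of_gt hn0))
    simpa using this
  -- factor 3
  have h3 : Tendsto (fun q : ℝ => ((n * (p - 1)) / (n * (p - 1) - γ)) ^ ((1 - 1 / p) + 1 / q)) l
      (𝓝 (((n * (p - 1)) / (n * (p - 1) - γ)) ^ ((1 - 1 / p) + 1 / p))) :=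
    (tendsto_const_nhds).rpow (tendsto_const_nhds.add hinvq) (Or.inl (ne_of_gt hK3))
  -- factor 4
  have h4 : Tendsto (fun q : ℝ => ((p / (p - 1)) / q) ^ (1 / q)) l
      (𝓝 (((p / (p - 1)) / p) ^ (1 / p))) :=
    (tendsto_const_nhds.div hqid (ne_of_gt hp0)).rpow hinvq
      (Or.inl (by positivity))
  -- factor 5
  set L : ℝ := Real.log p - ((p - 1) / p) * Real.log (p - 1) with hLdef
  -- the value of L
  have hLB : Tendsto (fun q : ℝ =>
      -((2 * p - q) / (p * q)) * Real.log ((2 * p - q) / (p * q - 2 * q + 2 * p))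
        - ((p - 1) / p) * Real.log (q * (p - 1) / (p * q - 2 * q + 2 * p))) l (𝓝 L) := by
    have hd : p * p - 2 * p + 2 * p ≠ 0 := by nlinarith
    have hc1 : ContinuousAt (fun q : ℝ => (2 * p - q) / (p * q - 2 * q + 2 * p)) p := by
      exact (continuousAt_const.sub continuousAt_id).div
        (((continuousAt_const.mul continuousAt_id).sub
          (continuousAt_const.mul continuousAt_id)).add continuousAt_const) (by nlinarith)
    have hc2 : ContinuousAt (fun q : ℝ => q * (p - 1) / (p * q - 2 * q + 2 * p)) p := by
      exact (continuousAt_id.mul continuousAt_const).div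
        (((continuousAt_const.mul continuousAt_id).sub
          (continuousAt_const.mul continuousAt_id)).add continuousAt_const) (by nlinarith)
    have hv1 : (2 * p - p) / (p * p - 2 * p + 2 * p) ≠ 0 := by
      have : (0:ℝ) < (2 * p - p) / (p * p - 2 * p + 2 * p) := by
        apply div_pos (by linarith) (by nlinarith)
      exact ne_of_gt this
    have hv2 : p * (p - 1) / (p * p - 2 * p + 2 * p) ≠ 0 := by
      have : (0:ℝ) < p * (p - 1) / (p * p - 2 * p + 2 * p) := by
        apply div_pos (by nlinarith) (by nlinarith)
      exact ne_of_gt this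
    have hcont : ContinuousAt (fun q : ℝ =>
        -((2 * p - q) / (p * q)) * Real.log ((2 * p - q) / (p * q - 2 * q + 2 * p))
          - ((p - 1) / p) * Real.log (q * (p - 1) / (p * q - 2 * q + 2 * p))) p := by
      refine ContinuousAt.sub (ContinuousAt.mul ?_ (hc1.log hv1))
        (continuousAt_const.mul (hc2.log hv2))
      exact ((continuousAt_const.sub continuousAt_id).div
        (continuousAt_const.mul continuousAt_id) (mul_ne_zero hp0.ne' hp0.ne')).neg
    have := hcont.tendsto.mono_left (nhdsWithin_le_nhds : 𝓝[>] p ≤ 𝓝 p)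
    have hval : -((2 * p - p) / (p * p)) * Real.log ((2 * p - p) / (p * p - 2 * p + 2 * p))
        - ((p - 1) / p) * Real.log (p * (p - 1) / (p * p - 2 * p + 2 * p)) = L := by
      have e1 : (2 * p - p) / (p * p - 2 * p + 2 * p) = p⁻¹ := by
        rw [show 2 * p - p = p by ring, show p * p - 2 * p + 2 * p = p * p by ring,
          div_mul_eq_div_div, div_self (ne_of_gt hp0), one_div]
      have e2 : p * (p - 1) / (p * p - 2 * p + 2 * p) = (p - 1) / p := by
        rw [div_eq_div_iff hd hp0.ne']; ring
      rw [e1, e2, Real.log_inv, Real.log_div (ne_of_gt hp1) (ne_of_gt hp0), hLdef]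
      set A := Real.log p
      set B := Real.log (p - 1)
      field_simp
      ring
    rw [hval] at this
    exact this
  have hBtend : Tendsto (fun q : ℝ =>
      (1 / q - 1 / p) * Real.log (betaFn (p / (q - p)) ((q - 1) * (p / (q - p))))) l (𝓝 L) := by
    refine tendsto_order.2 ⟨?_, ?_⟩
    · intro c hc
      filter_upwards [hLB.eventually (eventually_gt_nhds hc), hev] with q hq1 hq2
      exact lt_of_lt_of_le hq1 (TermB_ge hp hq2.1 hq2.2)
    · intro c hc
      -- limit of upper bounds as ε → 0⁺
      have hU : Tendsto (fun ε : ℝ =>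
          -(1 / p) * Real.log (1 / p - ε) - ((p - 1) / p) * Real.log ((p - 1) / p))
          (𝓝[>] (0:ℝ)) (𝓝 L) := by
        have hcont : ContinuousAt (fun ε : ℝ =>
            -(1 / p) * Real.log (1 / p - ε) - ((p - 1) / p) * Real.log ((p - 1) / p)) 0 := by
          refine ContinuousAt.sub (continuousAt_const.mul ?_) continuousAt_const
          refine ContinuousAt.log (continuousAt_const.sub continuousAt_id) ?_
          simp only [sub_zero]
          positivity
        have := hcont.tendsto.mono_left (nhdsWithin_le_nhds : 𝓝[>] (0:ℝ) ≤ 𝓝 0)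
        have hval : -(1 / p) * Real.log (1 / p - 0) - ((p - 1) / p) * Real.log ((p - 1) / p)
            = L := by
          rw [sub_zero, one_div, Real.log_inv,
            Real.log_div (ne_of_gt hp1) (ne_of_gt hp0), hLdef]
          set A := Real.log p
          set B := Real.log (p - 1)
          field_simp
          ring
        rw [hval] at this
        exact this
      have hhalf : (0:ℝ) < 1 / (2 * p) := by positivity
      obtain ⟨ε, hεc, hε⟩ := ((hU.eventually (eventually_lt_nhds hc)).and
        (Ioo_mem_nhdsGT_of_mem ⟨le_refl (0:ℝ), hhalf⟩)).exists
      have hε0 : 0 < ε := hε.1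
      have hεs : ε < 1 / (2 * p) := hε.2
      have hu0 : 0 < 1 / p - ε := by
        have : 1 / (2 * p) < 1 / p := by
          rw [div_lt_div_iff₀ (by positivity) hp0]; nlinarith
        linarith
      have huv : 1 / p - ε < 1 / p := by linarith
      -- upper bound function of q
      have hUB : Tendsto (fun q : ℝ =>
          -((q - p) / (p * q)) * Real.log (1 / p - (1 / p - ε))
            - ((2 * p - q) / (p * q)) * Real.log (1 / p - ε)
            - ((p - 1) / p) * Real.log ((p - 1) / p)) l
          (𝓝 (-(1 / p) * Real.log (1 / p - ε) - ((p - 1) / p) * Real.log ((p - 1) / p))) := by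
        have this : Tendsto (fun q : ℝ =>
            -((q - p) / (p * q)) * Real.log (1 / p - (1 / p - ε))
              - ((2 * p - q) / (p * q)) * Real.log (1 / p - ε)
              - ((p - 1) / p) * Real.log ((p - 1) / p)) (𝓝[>] p)
            (𝓝 (-((p - p) / (p * p)) * Real.log (1 / p - (1 / p - ε))
              - ((2 * p - p) / (p * p)) * Real.log (1 / p - ε)
              - ((p - 1) / p) * Real.log ((p - 1) / p))) := by
          refine Tendsto.sub (Tendsto.sub ?_ ?_) tendsto_const_nhds
          · exact (((hqid.sub tendsto_const_nhds).div
              (tendsto_const_nhds.mul hqid) (by positivity)).neg).mul_const _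
          · exact ((tendsto_const_nhds.sub hqid).div
              (tendsto_const_nhds.mul hqid) (by positivity)).mul_const _
        have hval : -((p - p) / (p * p)) * Real.log (1 / p - (1 / p - ε))
            - ((2 * p - p) / (p * p)) * Real.log (1 / p - ε)
            - ((p - 1) / p) * Real.log ((p - 1) / p)
            = -(1 / p) * Real.log (1 / p - ε) - ((p - 1) / p) * Real.log ((p - 1) / p) := by
          set A := Real.log (1 / p - (1 / p - ε))
          set B := Real.log (1 / p - ε)
          set C := Real.log ((p - 1) / p)
          field_simp
          ring
        rw [hval] at this
        exact this
      filter_upwards [hUB.eventually (eventually_lt_nhds hεc), hev] with q hq1 hq2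
      exact lt_of_le_of_lt (TermB_le hp hq2.1 hq2.2 hu0 huv) hq1
  have hAtend : Tendsto (fun q : ℝ => (1 / q - 1 / p) * Real.log (p / (q - p))) l (𝓝 0) := by
    have hxlx : Tendsto (fun q : ℝ => Real.log (q - p) * (q - p)) l (𝓝 0) := by
      have hbase := tendsto_log_mul_rpow_nhdsGT_zero (r := 1) one_pos
      have hmap : Tendsto (fun q : ℝ => q - p) l (𝓝[>] (0:ℝ)) := by
        rw [tendsto_nhdsWithin_iff]
        constructor
        · have := hqid.sub (tendsto_const_nhds (x := p)); simpa using this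
        · filter_upwards [hev] with q hq
          exact sub_pos.2 hq.1
      have := hbase.comp hmap
      simpa [Real.rpow_one, Function.comp_def] using this
    have hinvpq : Tendsto (fun q : ℝ => 1 / (p * q)) l (𝓝 (1 / (p * p))) :=
      tendsto_const_nhds.div (tendsto_const_nhds.mul hqid) (by positivity)
    have hg : Tendsto (fun q : ℝ =>
        (1 / q - 1 / p) * Real.log p + (Real.log (q - p) * (q - p)) * (1 / (p * q))) l (𝓝 0) := by
      have := (he0.mul_const (Real.log p)).add (hxlx.mul hinvpq)
      simpa using this
    refine hg.congr' ?_
    filter_upwards [hev] with q hq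
    have hqp : 0 < q - p := sub_pos.2 hq.1
    have hq0 : 0 < q := by linarith
    have h1 : 1 / q - 1 / p = -((q - p) / (p * q)) := by
      rw [div_sub_div _ _ (ne_of_gt hq0) (ne_of_gt hp0), ← neg_div, mul_comm q p]
      congr 1
      ring
    rw [Real.log_div (ne_of_gt hp0) (ne_of_gt hqp), h1]
    set A := Real.log p
    set B := Real.log (q - p)
    have hpq : p * q ≠ 0 := by positivity
    field_simp
    ring
  have h5 : Tendsto (fun q : ℝ =>
      ((p / (q - p)) * betaFn (p / (q - p)) (p * q / ((q / (q - 1)) * (q - p)))) ^ (1 / q - 1 / p))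
      l (𝓝 (Real.exp L)) := by
    have key0 : Tendsto (fun q : ℝ =>
        (1 / q - 1 / p) * Real.log ((p / (q - p)) *
          betaFn (p / (q - p)) (p * q / ((q / (q - 1)) * (q - p))))) l (𝓝 L) := by
      have hsum := hAtend.add hBtend
      rw [zero_add] at hsum
      refine hsum.congr' ?_
      filter_upwards [hev] with q hq
      have hqp : 0 < q - p := sub_pos.2 hq.1
      have hq1 : (1:ℝ) < q := by linarith
      have harg : p * q / ((q / (q - 1)) * (q - p)) = (q - 1) * (p / (q - p)) := by
        have h1 : q - 1 ≠ 0 := by linarith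
        have h2 : q ≠ 0 := by linarith
        have h3 : q - p ≠ 0 := ne_of_gt hqp
        field_simp
      obtain ⟨hz, hw, hD, hBpos⟩ := basic_facts hp hq.1 hq.2
      rw [harg, ← mul_add, Real.log_mul (by positivity) (ne_of_gt hBpos)]
    have := (Real.continuous_exp.tendsto L).comp key0
    refine this.congr' ?_
    filter_upwards [hev] with q hq
    have hqp : 0 < q - p := sub_pos.2 hq.1
    have harg : p * q / ((q / (q - 1)) * (q - p)) = (q - 1) * (p / (q - p)) := by
      have h1 : q - 1 ≠ 0 := by linarith [hq.1]
      have h2 : q ≠ 0 := by linarith [hq.1]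
      have h3 : q - p ≠ 0 := ne_of_gt hqp
      field_simp
    obtain ⟨hz, hw, hD, hBpos⟩ := basic_facts hp hq.1 hq.2
    have hXpos : 0 < (p / (q - p)) * betaFn (p / (q - p)) (p * q / ((q / (q - 1)) * (q - p))) := by
      rw [harg]
      positivity
    simp only [Function.comp_apply]
    rw [Real.rpow_def_of_pos hXpos, mul_comm]
  -- combine
  have hmul := (((h1.mul h2).mul h3).mul h4).mul h5
  have hfinal : 1 * 1 * ((n * (p - 1)) / (n * (p - 1) - γ)) ^ ((1 - 1 / p) + 1 / p)
      * ((p / (p - 1)) / p) ^ (1 / p) * Real.exp L = p / (p - 1 - γ / n) := by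
    have e0 : ((1:ℝ) - 1 / p) + 1 / p = 1 := by ring
    have e1 : (p / (p - 1)) / p = (p - 1)⁻¹ := by
      rw [div_div, mul_comm (p - 1) p, ← div_div, div_self (ne_of_gt hp0), one_div]
    have e2 : ((p - 1):ℝ)⁻¹ ^ ((1:ℝ) / p) = (((p - 1):ℝ) ^ ((1:ℝ) / p))⁻¹ :=
      Real.inv_rpow hp1.le _
    have e3 : Real.exp L = p / ((p - 1) ^ (((p:ℝ) - 1) / p)) := by
      rw [hLdef, Real.exp_sub, Real.exp_log hp0]
      congr 1
      rw [Real.rpow_def_of_pos hp1, mul_comm]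
    have e4 : ((p - 1):ℝ) ^ ((1:ℝ) / p) * ((p - 1):ℝ) ^ (((p:ℝ) - 1) / p) = p - 1 := by
      rw [← Real.rpow_add hp1]
      have : (1:ℝ) / p + (p - 1) / p = 1 := by field_simp; ring
      rw [this, Real.rpow_one]
    rw [e0, Real.rpow_one, e1, e2, e3]
    have hX : (0:ℝ) < ((p - 1):ℝ) ^ ((1:ℝ) / p) := Real.rpow_pos_of_pos hp1 _
    have hY : (0:ℝ) < ((p - 1):ℝ) ^ (((p:ℝ) - 1) / p) := Real.rpow_pos_of_pos hp1 _
    have hden : (0:ℝ) < p - 1 - γ / n := by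
      rw [sub_pos, div_lt_iff₀ hn0]
      nlinarith
    have key : ((((p:ℝ) - 1) ^ ((1:ℝ) / p))⁻¹) * (p / ((p - 1) ^ (((p:ℝ) - 1) / p)))
        = p / (p - 1) := by
      rw [inv_mul_eq_div, div_div, mul_comm, e4]
    rw [one_mul, one_mul, mul_assoc, key, div_mul_div_comm,
      div_eq_div_iff (by positivity) (ne_of_gt hden)]
    field_simp
  rw [hfinal] at hmul
  exact hmul
end

section
/- For fixed 1 < p < ∞, the limit lim_{q→p⁺} (p'/q)^{1/q} ((p/(q-p)) · B(p/(q-p), pq/(q'(q-p))))^{1/q - 1/p} = p/(p-1) holds, where p' = p/(p-1), q' = q/(q-1), and B is the Euler Beta function. -/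
open MeasureTheory Set Filter
open scoped ENNReal Topology

open Real


section betaBounds

variable {u v : ℝ} (hu : 1 ≤ u) (hv : 1 ≤ v)

lemma integrand_meas (u v : ℝ) : Measurable (fun t : ℝ => t ^ u * (1 - t) ^ v) :=
  (measurable_id.pow_const u).mul ((measurable_const.sub measurable_id).pow_const v)

include hu hv in
lemma integrand_intOn : IntegrableOn (fun t : ℝ => t ^ u * (1 - t) ^ v) (Ioo 0 1) := by
  apply Measure.integrableOn_of_bounded (M := 1)
    (by simp [Real.volume_Ioo]) (integrand_meas u v).aestronglyMeasurable
  filter_upwards [ae_restrict_mem measurableSet_Ioo] with t ht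
  have h1 : (0:ℝ) ≤ t ^ u := Real.rpow_nonneg ht.1.le u
  have h2 : (0:ℝ) ≤ (1 - t) ^ v := Real.rpow_nonneg (by linarith [ht.2]) v
  rw [Real.norm_of_nonneg (mul_nonneg h1 h2)]
  calc t ^ u * (1 - t) ^ v ≤ 1 * 1 := by
        apply mul_le_mul _ _ h2 zero_le_one
        · exact Real.rpow_le_one (by linarith [ht.1]) ht.2.le (by linarith)
        · exact Real.rpow_le_one (by linarith [ht.2]) (by linarith [ht.1]) (by linarith)
    _ = 1 := one_mul 1

include hu hv in
lemma integrand_le {t : ℝ} (ht : t ∈ Ioo (0:ℝ) 1) :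
    t ^ u * (1 - t) ^ v ≤ (u / (u + v)) ^ u * (v / (u + v)) ^ v := by
  have hu0 : (0:ℝ) < u := by linarith
  have hv0 : (0:ℝ) < v := by linarith
  have hs : (0:ℝ) < u + v := by linarith
  set w₁ := u / (u + v) with hw₁
  set w₂ := v / (u + v) with hw₂
  have hw₁0 : 0 < w₁ := div_pos hu0 hs
  have hw₂0 : 0 < w₂ := div_pos hv0 hs
  have hws : w₁ + w₂ = 1 := by rw [hw₁, hw₂, ← add_div, div_self hs.ne']
  have key : (t / w₁) ^ w₁ * ((1 - t) / w₂) ^ w₂ ≤ 1 := by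
    calc (t / w₁) ^ w₁ * ((1 - t) / w₂) ^ w₂
        ≤ w₁ * (t / w₁) + w₂ * ((1 - t) / w₂) :=
          Real.geom_mean_le_arith_mean2_weighted hw₁0.le hw₂0.le
            (div_nonneg ht.1.le hw₁0.le) (div_nonneg (by linarith [ht.2]) hw₂0.le) hws
      _ = 1 := by
          rw [mul_comm w₁, mul_comm w₂, div_mul_cancel₀ _ hw₁0.ne',
            div_mul_cancel₀ _ hw₂0.ne']; ring
  have key2 : t ^ w₁ * (1 - t) ^ w₂ ≤ w₁ ^ w₁ * w₂ ^ w₂ := by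
    rw [Real.div_rpow ht.1.le hw₁0.le, Real.div_rpow (by linarith [ht.2]) hw₂0.le] at key
    have h := mul_le_mul_of_nonneg_right key
      (mul_nonneg (Real.rpow_nonneg hw₁0.le w₁) (Real.rpow_nonneg hw₂0.le w₂))
    rw [one_mul] at h
    calc t ^ w₁ * (1 - t) ^ w₂
        = t ^ w₁ / w₁ ^ w₁ * ((1 - t) ^ w₂ / w₂ ^ w₂) * (w₁ ^ w₁ * w₂ ^ w₂) := by
          have n1 : w₁ ^ w₁ ≠ 0 := (Real.rpow_pos_of_pos hw₁0 w₁).ne'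
          have n2 : w₂ ^ w₂ ≠ 0 := (Real.rpow_pos_of_pos hw₂0 w₂).ne'
          field_simp
      _ ≤ w₁ ^ w₁ * w₂ ^ w₂ := h
  have hL0 : 0 ≤ t ^ w₁ * (1 - t) ^ w₂ :=
    mul_nonneg (Real.rpow_nonneg ht.1.le _) (Real.rpow_nonneg (by linarith [ht.2]) _)
  have := Real.rpow_le_rpow hL0 key2 hs.le
  rw [Real.mul_rpow (Real.rpow_nonneg ht.1.le _) (Real.rpow_nonneg (by linarith [ht.2]) _),
      Real.mul_rpow (Real.rpow_nonneg hw₁0.le _) (Real.rpow_nonneg hw₂0.le _),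
      ← Real.rpow_mul ht.1.le, ← Real.rpow_mul (by linarith [ht.2] : (0:ℝ) ≤ 1 - t),
      ← Real.rpow_mul hw₁0.le, ← Real.rpow_mul hw₂0.le] at this
  have e1 : w₁ * (u + v) = u := by rw [hw₁]; exact div_mul_cancel₀ u hs.ne'
  have e2 : w₂ * (u + v) = v := by rw [hw₂]; exact div_mul_cancel₀ v hs.ne'
  rwa [e1, e2] at this

include hu hv in
lemma betaFn_le_s13 :
    betaFn (u + 1) (v + 1) ≤ (u / (u + v)) ^ u * (v / (u + v)) ^ v := by
  have hM : betaFn (u+1) (v+1) = ∫ t in Ioo (0:ℝ) 1, t ^ u * (1-t) ^ v := by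
    simp [betaFn]
  rw [hM]
  calc (∫ t in Ioo (0:ℝ) 1, t ^ u * (1-t) ^ v)
      ≤ ∫ _ in Ioo (0:ℝ) 1, (u / (u + v)) ^ u * (v / (u + v)) ^ v :=
        setIntegral_mono_on (integrand_intOn hu hv)
          (integrableOn_const (by simp [Real.volume_Ioo]))
          measurableSet_Ioo (fun t ht => integrand_le hu hv ht)
    _ = (u / (u + v)) ^ u * (v / (u + v)) ^ v := by
        simp [Real.volume_Ioo]

include hu hv in
lemma betaFn_ge :
    (u / (u + v)) ^ u * (v / (u + v)) ^ v / (4 * (u + v)) ≤ betaFn (u + 1) (v + 1) := by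
  have hu0 : (0:ℝ) < u := by linarith
  have hv0 : (0:ℝ) < v := by linarith
  have hs : (0:ℝ) < u + v := by linarith
  set w₁ := u / (u + v) with hw₁
  set M := w₁ ^ u * (v / (u + v)) ^ v with hM
  set a := w₁ - 1 / (2 * (u + v)) with ha
  have hw₁0 : 0 < w₁ := div_pos hu0 hs
  have hw₁1 : w₁ < 1 := (div_lt_one hs).2 (by linarith)
  have ha0 : 0 < a := by
    rw [ha, hw₁, sub_pos, div_lt_div_iff₀ (by linarith) hs]
    nlinarith
  have hI : Ioc a w₁ ⊆ Ioo (0:ℝ) 1 := fun t ht => ⟨lt_of_lt_of_le ha0 ht.1.le, lt_of_le_of_lt ht.2 hw₁1⟩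
  have hMpos : 0 < M := mul_pos (Real.rpow_pos_of_pos hw₁0 u) (Real.rpow_pos_of_pos (div_pos hv0 hs) v)
  -- pointwise lower bound on Ioc a w₁
  have hpt : ∀ t ∈ Ioc a w₁, M / 2 ≤ t ^ u * (1 - t) ^ v := by
    intro t ht
    have ht0 : 0 < t := lt_of_lt_of_le ha0 ht.1.le
    have h1 : a ^ u ≤ t ^ u := Real.rpow_le_rpow ha0.le ht.1.le hu0.le
    have h2 : (v / (u + v)) ^ v ≤ (1 - t) ^ v := by
      apply Real.rpow_le_rpow (div_nonneg hv0.le hs.le) _ hv0.le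
      have : w₁ + v / (u + v) = 1 := by
        rw [hw₁, ← add_div, div_self hs.ne']
      nlinarith [ht.2]
    have hber : w₁ ^ u / 2 ≤ a ^ u := by
      have hrw : a = w₁ * (1 + -(1 / (2 * u))) := by
        rw [ha, hw₁]; field_simp; ring
      have hb := one_add_mul_self_le_rpow_one_add
        (s := -(1 / (2 * u))) (by rw [neg_le, neg_neg]; rw [div_le_one (by linarith)]; linarith) hu
      have hbl : 1 + u * -(1 / (2 * u)) = 1 / 2 := by field_simp; ring
      rw [hbl] at hb
      calc w₁ ^ u / 2 = w₁ ^ u * (1 / 2) := by ring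
        _ ≤ w₁ ^ u * (1 + -(1 / (2 * u))) ^ u :=
            mul_le_mul_of_nonneg_left hb (Real.rpow_nonneg hw₁0.le u)
        _ = a ^ u := by
            rw [← Real.mul_rpow hw₁0.le (by nlinarith : (0:ℝ) ≤ 1 + -(1 / (2 * u))), ← hrw]
    calc M / 2 = w₁ ^ u / 2 * (v / (u + v)) ^ v := by rw [hM]; ring
      _ ≤ a ^ u * (v / (u + v)) ^ v :=
          mul_le_mul_of_nonneg_right hber (Real.rpow_nonneg (div_nonneg hv0.le hs.le) v)
      _ ≤ t ^ u * (1 - t) ^ v := by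
          apply mul_le_mul (le_trans h1 (le_refl _)) h2
            (Real.rpow_nonneg (div_nonneg hv0.le hs.le) v) (Real.rpow_nonneg ht0.le u)
  have hBeq : betaFn (u+1) (v+1) = ∫ t in Ioo (0:ℝ) 1, t ^ u * (1-t) ^ v := by
    simp [betaFn]
  have hvol : (volume (Ioc a w₁)).toReal = 1 / (2 * (u + v)) := by
    rw [Real.volume_Ioc, ha]
    have e : w₁ - (w₁ - 1 / (2 * (u + v))) = 1 / (2 * (u + v)) := by ring
    rw [e, ENNReal.toReal_ofReal (by positivity)]
  rw [hBeq]
  calc M / (4 * (u + v))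
      = (volume (Ioc a w₁)).toReal • (M / 2) := by
        rw [hvol, smul_eq_mul, div_mul_div_comm, one_mul]
        congr 1; ring
    _ = ∫ _ in Ioc a w₁, M / 2 := (setIntegral_const _).symm
    _ ≤ ∫ t in Ioc a w₁, t ^ u * (1-t) ^ v :=
        setIntegral_mono_on (integrableOn_const (by
          rw [Real.volume_Ioc]; exact ENNReal.ofReal_ne_top))
          ((integrand_intOn hu hv).mono_set hI) measurableSet_Ioc hpt
    _ ≤ ∫ t in Ioo (0:ℝ) 1, t ^ u * (1-t) ^ v := by
        apply setIntegral_mono_set (integrand_intOn hu hv)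
        · filter_upwards [ae_restrict_mem measurableSet_Ioo] with t ht
          exact mul_nonneg (Real.rpow_nonneg ht.1.le u) (Real.rpow_nonneg (by linarith [ht.2]) v)
        · exact HasSubset.Subset.eventuallyLE hI

end betaBounds

set_option maxHeartbeats 1000000 in
/-- Persson–Samko limit: `(p'/q)^{1/q} ((p/(q-p)) B(p/(q-p), pq/(q'(q-p))))^{1/q-1/p}`
tends to `p/(p-1)` as `q → p⁺`. -/
theorem persson_samko_limit (p : ℝ) (hp : 1 < p) :
    Tendsto (fun q : ℝ =>
        ((p / (p - 1)) / q) ^ (1 / q) *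
          ((p / (q - p)) *
            betaFn (p / (q - p)) (p * q / ((q / (q - 1)) * (q - p)))) ^ (1 / q - 1 / p))
      (𝓝[>] p) (𝓝 (p / (p - 1))) := by
  have hp0 : (0:ℝ) < p := by linarith
  have hp1 : (0:ℝ) < p - 1 := by linarith
  have hp' : (0:ℝ) < p / (p - 1) := div_pos hp0 hp1
  -- names
  set L1 : ℝ → ℝ := fun q => (1/q) * Real.log ((p/(p-1))/q) with hL1
  set L2 : ℝ → ℝ := fun q => (1/q - 1/p) * Real.log (p/(q-p)) with hL2
  set L3 : ℝ → ℝ := fun q => (1/q - 1/p) *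
      Real.log (betaFn (p / (q - p)) (p * q / ((q / (q - 1)) * (q - p)))) with hL3
  set G : ℝ → ℝ := fun q => -(1/(p*q)) *
      ((2*p - q) * Real.log ((2*p - q)/(2*p - 2*q + p*q)) +
        q*(p-1) * Real.log (q*(p-1)/(2*p - 2*q + p*q))) with hG
  set g2 : ℝ → ℝ := fun q => G q + (1/(p*q)) *
      ((q-p) * Real.log (4*(2*p - 2*q + p*q)) - (q-p) * Real.log (q-p)) with hg2
  -- the eventual set
  have hEv : ∀ᶠ q in 𝓝[>] p, q ∈ Ioo p (p + min (p/2) (p*(p-1)/2)) := by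
    have hmin : 0 < min (p/2) (p*(p-1)/2) := by
      apply lt_min (by linarith) (by nlinarith)
    exact Ioo_mem_nhdsGT_of_mem ⟨le_refl p, by linarith⟩
  -- main eventual facts
  have main : ∀ᶠ q in 𝓝[>] p,
      (((p / (p - 1)) / q) ^ (1 / q) *
          ((p / (q - p)) *
            betaFn (p / (q - p)) (p * q / ((q / (q - 1)) * (q - p)))) ^ (1 / q - 1 / p)
        = Real.exp (L1 q + L2 q + L3 q)) ∧ G q ≤ L3 q ∧ L3 q ≤ g2 q := by
    filter_upwards [hEv] with q hq
    obtain ⟨hq1, hq2⟩ := hq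
    have hq2a : q < p + p/2 := lt_of_lt_of_le hq2 (by gcongr; exact min_le_left _ _)
    have hq2b : q < p + p*(p-1)/2 := lt_of_lt_of_le hq2 (by gcongr; exact min_le_right _ _)
    have hq0 : (0:ℝ) < q := by linarith
    have hq1' : (1:ℝ) < q := by linarith
    have hε : (0:ℝ) < q - p := by linarith
    have h2pq : (0:ℝ) < 2*p - q := by linarith
    have hD : (0:ℝ) < 2*p - 2*q + p*q := by nlinarith
    have hc : 1/q - 1/p < 0 := by
      rw [sub_neg, div_lt_div_iff₀ hq0 hp0]; nlinarith
    set u : ℝ := p/(q-p) - 1 with hu_def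
    set v : ℝ := p*(q-1)/(q-p) - 1 with hv_def
    have hu : 1 ≤ u := by
      rw [hu_def, le_sub_iff_add_le, le_div_iff₀ hε]; linarith
    have hv : 1 ≤ v := by
      rw [hv_def, le_sub_iff_add_le, le_div_iff₀ hε]; nlinarith
    have hu_eq : u = (2*p - q)/(q-p) := by rw [hu_def]; field_simp; ring
    have hv_eq : v = q*(p-1)/(q-p) := by rw [hv_def]; field_simp; ring
    have huv : u + v = (2*p - 2*q + p*q)/(q-p) := by rw [hu_eq, hv_eq]; field_simp; ring
    have huv0 : 0 < u + v := by rw [huv]; positivity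
    have hu0 : 0 < u := by linarith
    have hv0 : 0 < v := by linarith
    have arg1 : p/(q-p) = u + 1 := by rw [hu_def]; ring
    have arg2 : p * q / ((q / (q - 1)) * (q - p)) = v + 1 := by
      rw [hv_def]; field_simp; ring
    have hw1 : u/(u+v) = (2*p - q)/(2*p - 2*q + p*q) := by
      rw [huv, hu_eq, div_div_div_eq, mul_comm (2*p - q) (q-p), mul_div_mul_left _ _ hε.ne']
    have hw2 : v/(u+v) = q*(p-1)/(2*p - 2*q + p*q) := by
      rw [huv, hv_eq, div_div_div_eq, mul_comm (q*(p-1)) (q-p), mul_div_mul_left _ _ hε.ne']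
    set M : ℝ := (u / (u + v)) ^ u * (v / (u + v)) ^ v with hM
    have hMpos : 0 < M :=
      mul_pos (Real.rpow_pos_of_pos (div_pos hu0 huv0) u)
        (Real.rpow_pos_of_pos (div_pos hv0 huv0) v)
    have hBle : betaFn (p/(q-p)) (p * q / ((q / (q - 1)) * (q - p))) ≤ M := by
      rw [arg1, arg2]; exact betaFn_le_s13 hu hv
    have hBge : M / (4*(u+v)) ≤ betaFn (p/(q-p)) (p * q / ((q / (q - 1)) * (q - p))) := by
      rw [arg1, arg2]; exact betaFn_ge hu hv
    have hBpos : 0 < betaFn (p/(q-p)) (p * q / ((q / (q - 1)) * (q - p))) :=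
      lt_of_lt_of_le (by positivity) hBge
    set B : ℝ := betaFn (p/(q-p)) (p * q / ((q / (q - 1)) * (q - p))) with hB
    -- log M
    have hlogM : Real.log M = u * Real.log (u/(u+v)) + v * Real.log (v/(u+v)) := by
      rw [hM, Real.log_mul (Real.rpow_pos_of_pos (div_pos hu0 huv0) u).ne'
        (Real.rpow_pos_of_pos (div_pos hv0 huv0) v).ne',
        Real.log_rpow (div_pos hu0 huv0), Real.log_rpow (div_pos hv0 huv0)]
    have hGM : G q = (1/q - 1/p) * Real.log M := by
      simp only [hG]
      rw [hlogM, hw1, hw2, hu_eq, hv_eq]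
      field_simp
      ring
    refine ⟨?_, ?_, ?_⟩
    · -- exp representation
      rw [Real.rpow_def_of_pos (div_pos hp' hq0),
          Real.rpow_def_of_pos (mul_pos (div_pos hp0 hε) hBpos),
          Real.log_mul (div_pos hp0 hε).ne' hBpos.ne', ← Real.exp_add]
      simp only [hL1, hL2, hL3]
      congr 1
      ring
    · -- lower bound
      simp only [hL3]
      rw [hGM]
      have := Real.log_le_log hBpos hBle
      exact mul_le_mul_of_nonpos_left this hc.le
    · -- upper bound
      simp only [hL3, hg2]
      rw [hGM]
      have hlog_low : Real.log (M/(4*(u+v))) ≤ Real.log B :=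
        Real.log_le_log (by positivity) hBge
      have h1 : (1/q - 1/p) * Real.log B ≤ (1/q - 1/p) * Real.log (M/(4*(u+v))) :=
        mul_le_mul_of_nonpos_left hlog_low hc.le
      have h2 : Real.log (M/(4*(u+v))) = Real.log M -
          (Real.log (4*(2*p - 2*q + p*q)) - Real.log (q-p)) := by
        rw [Real.log_div hMpos.ne' (by positivity), huv]
        rw [← mul_div_assoc, Real.log_div (by positivity) hε.ne']
      rw [h2] at h1
      refine le_trans h1 (le_of_eq ?_)
      have hceq : 1/q - 1/p = -((q-p)/(p*q)) := by
        rw [div_sub_div _ _ hq0.ne' hp0.ne', ← neg_div,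
          div_eq_div_iff (mul_pos hq0 hp0).ne' (mul_pos hp0 hq0).ne']
        ring
      rw [hceq]
      ring
  -- limits
  have hqp : Tendsto (fun q:ℝ => q - p) (𝓝[>] p) (𝓝[>] 0) := by
    apply tendsto_nhdsWithin_of_tendsto_nhds_of_eventually_within
    · have : Tendsto (fun q:ℝ => q - p) (𝓝 p) (𝓝 (p - p)) :=
        (continuous_id.sub continuous_const).tendsto p
      rw [sub_self] at this
      exact this.mono_left nhdsWithin_le_nhds
    · filter_upwards [self_mem_nhdsWithin] with q hq
      exact sub_pos.2 (show p < q from hq)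
  have hkey : Tendsto (fun q:ℝ => (q - p) * Real.log (q - p)) (𝓝[>] p) (𝓝 0) := by
    have h := tendsto_log_mul_rpow_nhdsGT_zero (r := 1) one_pos
    simp only [Real.rpow_one] at h
    have := h.comp hqp
    simpa [Function.comp_def, mul_comm] using this
  have hinv : Tendsto (fun q:ℝ => 1/(p*q)) (𝓝[>] p) (𝓝 (1/(p*p))) := by
    apply Tendsto.mono_left _ nhdsWithin_le_nhds
    exact (continuousAt_const.div (continuousAt_const.mul continuousAt_id)
      (show p*p ≠ 0 by positivity)).tendsto
  have hsub : Tendsto (fun q:ℝ => 1/q - 1/p) (𝓝[>] p) (𝓝 0) := by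
    have : Tendsto (fun q:ℝ => 1/q - 1/p) (𝓝 p) (𝓝 (1/p - 1/p)) :=
      ((continuousAt_const.div continuousAt_id hp0.ne').sub continuousAt_const).tendsto
    rw [sub_self] at this
    exact this.mono_left nhdsWithin_le_nhds
  -- T1
  have T1 : Tendsto L1 (𝓝[>] p) (𝓝 ((1/p) * Real.log ((p/(p-1))/p))) := by
    rw [hL1]
    apply Tendsto.mono_left _ nhdsWithin_le_nhds
    exact ((continuousAt_const.div continuousAt_id hp0.ne').mul
      ((continuousAt_const.div continuousAt_id hp0.ne').log (show (p/(p-1))/p ≠ 0 by positivity))).tendsto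
  -- T2
  have T2 : Tendsto L2 (𝓝[>] p) (𝓝 0) := by
    have heq : ∀ᶠ q in 𝓝[>] p, (1/q - 1/p) * Real.log p +
        (1/(p*q)) * ((q-p) * Real.log (q-p)) = L2 q := by
      filter_upwards [self_mem_nhdsWithin] with q hq
      have hq0 : (0:ℝ) < q := lt_trans hp0 hq
      have hε : (0:ℝ) < q - p := sub_pos.2 hq
      simp only [hL2]
      rw [Real.log_div hp0.ne' hε.ne']
      field_simp
      ring
    have : Tendsto (fun q => (1/q - 1/p) * Real.log p +
        (1/(p*q)) * ((q-p) * Real.log (q-p))) (𝓝[>] p) (𝓝 (0 * Real.log p + (1/(p*p)) * 0)) :=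
      (hsub.mul tendsto_const_nhds).add (hinv.mul hkey)
    rw [zero_mul, mul_zero, add_zero] at this
    exact this.congr' heq
  -- TG
  have hDp : (2*p - 2*p + p*p) ≠ 0 := by nlinarith
  have TG : Tendsto G (𝓝[>] p) (𝓝 (G p)) := by
    apply Tendsto.mono_left _ nhdsWithin_le_nhds
    simp only [hG]
    have c1 : ContinuousAt (fun q:ℝ => (2*p - q)/(2*p - 2*q + p*q)) p :=
      ContinuousAt.div (by fun_prop) (by fun_prop) hDp
    have c2 : ContinuousAt (fun q:ℝ => q*(p-1)/(2*p - 2*q + p*q)) p :=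
      ContinuousAt.div (by fun_prop) (by fun_prop) hDp
    have hne1 : (2*p - p)/(2*p - 2*p + p*p) ≠ 0 := div_ne_zero (by linarith) hDp
    have hne2 : p*(p-1)/(2*p - 2*p + p*p) ≠ 0 := div_ne_zero (by nlinarith) hDp
    have cinv : ContinuousAt (fun q:ℝ => -(1/(p*q))) p :=
      (continuousAt_const.div (continuousAt_const.mul continuousAt_id)
        (show p*p ≠ 0 by positivity)).neg
    exact (cinv.mul
      (((continuousAt_const.sub continuousAt_id).mul (c1.log hne1)).add
        ((continuousAt_id.mul continuousAt_const).mul (c2.log hne2)))).tendsto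
  -- Tg2
  have Tg2 : Tendsto g2 (𝓝[>] p) (𝓝 (G p)) := by
    have hlog4D : Tendsto (fun q:ℝ => (q-p) * Real.log (4*(2*p - 2*q + p*q)))
        (𝓝[>] p) (𝓝 0) := by
      have hc : ContinuousAt (fun q:ℝ => Real.log (4*(2*p - 2*q + p*q))) p :=
        (Real.continuousAt_log (by nlinarith)).comp (by fun_prop)
      have h0 : Tendsto (fun q:ℝ => q - p) (𝓝[>] p) (𝓝 0) :=
        hqp.mono_right nhdsWithin_le_nhds
      have := h0.mul (hc.tendsto.mono_left nhdsWithin_le_nhds)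
      simpa using this
    have : Tendsto (fun q => G q + (1/(p*q)) *
        ((q-p) * Real.log (4*(2*p - 2*q + p*q)) - (q-p) * Real.log (q-p)))
        (𝓝[>] p) (𝓝 (G p + (1/(p*p)) * (0 - 0))) :=
      TG.add (hinv.mul (hlog4D.sub hkey))
    rw [sub_zero, mul_zero, add_zero] at this
    rw [hg2]
    exact this
  -- squeeze
  have T3 : Tendsto L3 (𝓝[>] p) (𝓝 (G p)) := by
    apply tendsto_of_tendsto_of_tendsto_of_le_of_le' TG Tg2
    · filter_upwards [main] with q hq; exact hq.2.1
    · filter_upwards [main] with q hq; exact hq.2.2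
  -- total
  have Ttot : Tendsto (fun q => L1 q + L2 q + L3 q) (𝓝[>] p)
      (𝓝 ((1/p) * Real.log ((p/(p-1))/p) + 0 + G p)) := (T1.add T2).add T3
  have hval : (1/p) * Real.log ((p/(p-1))/p) + 0 + G p = Real.log (p/(p-1)) := by
    have e1 : (2*p - p)/(2*p - 2*p + p*p) = 1/p := by
      rw [div_eq_div_iff (ne_of_gt (by nlinarith)) hp0.ne']; ring
    have e2 : p*(p-1)/(2*p - 2*p + p*p) = (p-1)/p := by
      rw [div_eq_div_iff (ne_of_gt (by nlinarith)) hp0.ne']; ring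
    simp only [hG]
    rw [e1, e2, Real.log_div hp'.ne' hp0.ne', Real.log_div hp0.ne' hp1.ne',
      Real.log_div one_ne_zero hp0.ne', Real.log_div hp1.ne' hp0.ne', Real.log_one]
    field_simp
    ring
  rw [hval] at Ttot
  have := (Real.continuous_exp.tendsto _).comp Ttot
  rw [Real.exp_log hp'] at this
  apply this.congr'
  filter_upwards [main] with q hq
  simp only [Function.comp_apply]
  exact hq.1.symm
end

section
/- Let n ≥ 1 and 1 < p < q < ∞. The function g(s) = (1 + s^{nq/p - n})^{-q/(q-p)} on (0,∞) is extremal for the radial Hardy-type inequality: (n∫₀^∞ (n∫₀^s g(r) r^{n-1} dr)^q s^{-nq/p'-1} ds)^{1/q} = A · (n∫₀^∞ g(s)^p s^{n-1} ds)^{1/p}, where A = (p'/q)^{1/q} ((p/(q-p)) · B(p/(q-p), pq/(q'(q-p))))^{1/q - 1/p}. -/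
open MeasureTheory Set
open scoped ENNReal

section Aux
open Real

lemma betaFn_eq_gamma {x y : ℝ} (hx : 0 < x) (hy : 0 < y) :
    betaFn x y = Real.Gamma x * Real.Gamma y / Real.Gamma (x + y) := by
  have h1 : Complex.betaIntegral x y = ((betaFn x y : ℝ) : ℂ) := by
    rw [Complex.betaIntegral, intervalIntegral.integral_of_le zero_le_one,
      integral_Ioc_eq_integral_Ioo, betaFn]
    calc ∫ t in Ioo (0:ℝ) 1, (t : ℂ) ^ ((x:ℂ) - 1) * (1 - (t:ℂ)) ^ ((y:ℂ) - 1)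
        = ∫ t in Ioo (0:ℝ) 1, ((t ^ (x - 1) * (1 - t) ^ (y - 1) : ℝ) : ℂ) := by
          refine setIntegral_congr_fun measurableSet_Ioo fun t ht => ?_
          rw [Complex.ofReal_mul, Complex.ofReal_cpow ht.1.le,
            Complex.ofReal_cpow (by linarith [ht.2] : (0:ℝ) ≤ 1 - t)]
          push_cast
          ring
      _ = ((∫ t in Ioo (0:ℝ) 1, t ^ (x - 1) * (1 - t) ^ (y - 1) : ℝ) : ℂ) :=
          integral_ofReal
  have h2 := Complex.Gamma_mul_Gamma_eq_betaIntegral (s := x) (t := y)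
    (by simpa using hx) (by simpa using hy)
  rw [h1] at h2
  rw [Complex.Gamma_ofReal, Complex.Gamma_ofReal,
    (by push_cast; rfl : (x:ℂ) + y = ((x + y : ℝ) : ℂ)), Complex.Gamma_ofReal] at h2
  have h4 : Real.Gamma x * Real.Gamma y = Real.Gamma (x+y) * betaFn x y := by
    exact_mod_cast h2
  have h5 : Real.Gamma (x + y) ≠ 0 := (Real.Gamma_pos_of_pos (by linarith)).ne'
  field_simp [h4, mul_comm]
  linear_combination -h4

lemma rpow_subst (e m : ℝ) {α : ℝ} (hα : 0 < α) :
    ∫ s in Ioi (0:ℝ), s ^ (α * m - 1) * (1 + s ^ α) ^ e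
      = α⁻¹ * ∫ u in Ioi (0:ℝ), u ^ (m - 1) * (1 + u) ^ e := by
  rw [← integral_comp_rpow_Ioi_of_pos (g := fun u => u ^ (m - 1) * (1 + u) ^ e) hα,
    ← integral_const_mul]
  refine setIntegral_congr_fun measurableSet_Ioi fun s hs => ?_
  have hs0 : (0:ℝ) < s := hs
  have h1 : α⁻¹ * (α * s ^ (α - 1)) = s ^ (α - 1) := by
    rw [← mul_assoc, inv_mul_cancel₀ hα.ne', one_mul]
  rw [smul_eq_mul, ← rpow_mul hs0.le, ← mul_assoc, h1, ← mul_assoc, ← rpow_add hs0,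
    show α - 1 + α * (m - 1) = α * m - 1 by ring]

lemma intIoi_eq_betaFn (x y : ℝ) :
    ∫ u in Ioi (0:ℝ), u ^ (x - 1) * (1 + u) ^ (-(x + y)) = betaFn x y := by
  have himg : (fun t : ℝ => t / (1 - t)) '' Ioo 0 1 = Ioi 0 := by
    ext u
    constructor
    · rintro ⟨t, ⟨ht0, ht1⟩, rfl⟩
      exact div_pos ht0 (by linarith)
    · intro hu
      have hu0 : (0:ℝ) < u := hu
      refine ⟨u / (1 + u), ⟨by positivity, by rw [div_lt_one (by positivity)]; linarith⟩, ?_⟩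
      field_simp
      ring
  have hderiv : ∀ t ∈ Ioo (0:ℝ) 1, HasDerivWithinAt (fun t : ℝ => t / (1 - t))
      ((1 - t)⁻¹ ^ 2) (Ioo 0 1) t := by
    intro t ht
    have h1 : (1:ℝ) - t ≠ 0 := by have := ht.2; intro h; linarith [show t = 1 by linarith]
    have := (hasDerivAt_id t).div ((hasDerivAt_id t).const_sub 1) h1
    convert this.hasDerivWithinAt using 1
    · rfl
    · rfl
    · rfl
    · simp only [id]
      field_simp
      try ring
  have hinj : InjOn (fun t : ℝ => t / (1 - t)) (Ioo 0 1) := by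
    intro a ha b hb hab
    have ha1 : (1:ℝ) - a ≠ 0 := by have := ha.2; intro h; linarith [show a = 1 by linarith]
    have hb1 : (1:ℝ) - b ≠ 0 := by have := hb.2; intro h; linarith [show b = 1 by linarith]
    field_simp at hab
    nlinarith [hab]
  rw [← himg, integral_image_eq_integral_abs_deriv_smul measurableSet_Ioo hderiv hinj]
  rw [betaFn]
  refine setIntegral_congr_fun measurableSet_Ioo fun t ht => ?_
  have ht0 : (0:ℝ) < t := ht.1
  have ht1 : (0:ℝ) < 1 - t := by linarith [ht.2]
  have hplus : 1 + t / (1 - t) = (1 - t)⁻¹ := by field_simp; ring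
  have e1 : ((1 - t)⁻¹) ^ 2 = (1 - t) ^ (-2 : ℝ) := by
    rw [← rpow_natCast ((1-t)⁻¹) 2, inv_rpow ht1.le, ← rpow_neg ht1.le]
    norm_num
  have e2 : ((1 - t)⁻¹) ^ (x - 1) = (1 - t) ^ (-(x - 1)) := by
    rw [inv_rpow ht1.le, ← rpow_neg ht1.le]
  have e3 : ((1 - t)⁻¹) ^ (-(x + y)) = (1 - t) ^ (x + y) := by
    rw [inv_rpow ht1.le, ← rpow_neg ht1.le, neg_neg]
  rw [smul_eq_mul, abs_of_pos (by positivity), hplus, div_eq_mul_inv,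
    mul_rpow ht0.le (by positivity), e1, e2, e3, mul_assoc (t ^ (x-1)),
    ← rpow_add ht1, mul_comm (t ^ (x-1)), ← mul_assoc, ← rpow_add ht1,
    show (-2 : ℝ) + (-(x - 1) + (x + y)) = y - 1 by ring, mul_comm]

lemma inner_int (n : ℕ) (hn : 1 ≤ n) (p q : ℝ) (hp : 1 < p) (hpq : p < q)
    (g : ℝ → ℝ) (hg : ∀ s : ℝ, g s = (1 + s ^ ((n : ℝ) * q / p - n)) ^ (-(q / (q - p))))
    {s : ℝ} (hs : 0 < s) :
    (n:ℝ) * ∫ r in Ioo (0:ℝ) s, g r * r ^ ((n : ℝ) - 1)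
      = s ^ (n:ℝ) * (1 + s ^ ((n : ℝ) * q / p - n)) ^ (-(p / (q - p))) := by
  set α : ℝ := (n : ℝ) * q / p - n with hα_def
  set c : ℝ := p / (q - p) with hc_def
  have hn1 : (1:ℝ) ≤ (n:ℝ) := by exact_mod_cast hn
  have hp0 : (0:ℝ) < p := by linarith
  have hqp : (0:ℝ) < q - p := by linarith
  have hα : 0 < α := by
    rw [hα_def, sub_pos, lt_div_iff₀ hp0]
    have : (0:ℝ) < (n:ℝ) := by linarith
    nlinarith
  have hc : 0 < c := div_pos hp0 hqp
  have hαc : α * c = n := by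
    rw [hα_def, hc_def]
    field_simp
  have hq : -(q / (q - p)) = -c - 1 := by
    rw [hc_def]; field_simp; ring
  clear_value α c
  set F : ℝ → ℝ := fun r => r ^ (n:ℝ) * (1 + r ^ α) ^ (-c) with hF_def
  have hcont_pow : ContinuousOn (fun r : ℝ => (1 + r ^ α) ^ (-c)) (Icc 0 s) := by
    refine ContinuousOn.rpow_const ?_ fun r hr => Or.inl ?_
    · refine (continuousOn_const.add ?_)
      intro r hr
      exact (continuousAt_rpow_const r α (Or.inr hα.le)).continuousWithinAt
    · have : (0:ℝ) ≤ r := hr.1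
      positivity
  have hrn : ContinuousOn (fun r : ℝ => r ^ (n:ℝ)) (Icc 0 s) := by
    intro r hr
    exact (continuousAt_rpow_const r _ (Or.inr (by positivity))).continuousWithinAt
  have hrn1 : Continuous (fun r : ℝ => r ^ ((n:ℝ) - 1)) := by
    have : ((n:ℝ) - 1) = ((n - 1 : ℕ) : ℝ) := by push_cast [hn]; ring
    rw [this]
    simp_rw [rpow_natCast]
    exact continuous_pow _
  have hFcont : ContinuousOn F (Icc 0 s) := hrn.mul hcont_pow
  have hgcont : ContinuousOn (fun r => g r * r ^ ((n:ℝ) - 1)) (Icc 0 s) := by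
    have hcg : ContinuousOn (fun r : ℝ => (1 + r ^ α) ^ (-(q/(q-p)))) (Icc 0 s) := by
      refine ContinuousOn.rpow_const ?_ fun r hr => Or.inl ?_
      · refine (continuousOn_const.add ?_)
        intro r hr
        exact (continuousAt_rpow_const r α (Or.inr hα.le)).continuousWithinAt
      · have : (0:ℝ) ≤ r := hr.1
        positivity
    refine ContinuousOn.congr (hcg.mul hrn1.continuousOn) fun r hr => ?_
    rw [hg r]; rfl
  have hderiv : ∀ r ∈ Ioo (0:ℝ) s,
      HasDerivWithinAt F ((n:ℝ) * (g r * r ^ ((n:ℝ) - 1))) (Ioi r) r := by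
    intro r hr
    have hr0 : (0:ℝ) < r := hr.1
    have hA : (0:ℝ) < 1 + r ^ α := by positivity
    have h1 : HasDerivAt (fun r : ℝ => r ^ (n:ℝ)) ((n:ℝ) * r ^ ((n:ℝ) - 1)) r :=
      hasDerivAt_rpow_const (Or.inl hr0.ne')
    have h2 : HasDerivAt (fun r : ℝ => 1 + r ^ α) (α * r ^ (α - 1)) r := by
      simpa using (hasDerivAt_rpow_const (p := α) (Or.inl hr0.ne')).const_add 1
    have h3 : HasDerivAt (fun r : ℝ => (1 + r ^ α) ^ (-c))
        ((α * r ^ (α - 1)) * (-c) * (1 + r ^ α) ^ (-c - 1)) r :=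
      h2.rpow_const (Or.inl hA.ne')
    have h4 := h1.mul h3
    refine (h4.congr_deriv ?_).hasDerivWithinAt
    rw [hg r, hq]
    have e1 : (1 + r ^ α) ^ (-c) = (1 + r ^ α) ^ (-c - 1) * (1 + r ^ α) := by
      nth_rewrite 1 [show -c = (-c - 1) + 1 by ring]
      rw [rpow_add hA, rpow_one]
    have e2 : r ^ (n:ℝ) * r ^ (α - 1) = r ^ ((n:ℝ) - 1) * r ^ α := by
      rw [← rpow_add hr0, ← rpow_add hr0]; ring_nf
    rw [e1]
    linear_combination (-(c * α) * (1 + r ^ α) ^ (-c - 1)) * e2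
      - ((1 + r ^ α) ^ (-c - 1) * r ^ ((n:ℝ) - 1) * r ^ α) * hαc
  have hint : IntervalIntegrable (fun r => (n:ℝ) * (g r * r ^ ((n:ℝ) - 1))) volume 0 s :=
    ((continuousOn_const.mul hgcont).mono (by rw [uIcc_of_le hs.le])).intervalIntegrable
  have key := intervalIntegral.integral_eq_sub_of_hasDeriv_right_of_le hs.le hFcont hderiv hint
  rw [intervalIntegral.integral_of_le hs.le, integral_Ioc_eq_integral_Ioo,
    integral_const_mul] at key
  rw [key, hF_def]
  simp only
  rw [zero_rpow (by positivity : (n:ℝ) ≠ 0)]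
  simp

lemma betaFn_pos {x y : ℝ} (hx : 0 < x) (hy : 0 < y) : 0 < betaFn x y := by
  rw [betaFn_eq_gamma hx hy]
  have := Real.Gamma_pos_of_pos hx
  have := Real.Gamma_pos_of_pos hy
  have := Real.Gamma_pos_of_pos (add_pos hx hy)
  positivity

end Aux

open Real

/-- The function `g(s) = (1 + s^{nq/p-n})^{-q/(q-p)}` is extremal for the radial
Hardy-type inequality with `β = n(1/p - 1/q)`. -/
theorem radial_extremal_identity (n : ℕ) (hn : 1 ≤ n) (p q : ℝ)
    (hp : 1 < p) (hpq : p < q)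
    (g : ℝ → ℝ) (hg : ∀ s : ℝ, g s = (1 + s ^ ((n : ℝ) * q / p - n)) ^ (-(q / (q - p)))) :
    ((n : ℝ) * ∫ s in Ioi (0 : ℝ),
        ((n : ℝ) * ∫ r in Ioo (0 : ℝ) s, g r * r ^ ((n : ℝ) - 1)) ^ q *
          s ^ (-(n : ℝ) * q * (1 - 1 / p) - 1)) ^ (1 / q)
      = (((p / (p - 1)) / q) ^ (1 / q) *
          ((p / (q - p)) *
            betaFn (p / (q - p)) (p * q / ((q / (q - 1)) * (q - p)))) ^ (1 / q - 1 / p)) *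
        ((n : ℝ) * ∫ s in Ioi (0 : ℝ), g s ^ p * s ^ ((n : ℝ) - 1)) ^ (1 / p) := by
  have hn1 : (1:ℝ) ≤ (n:ℝ) := by exact_mod_cast hn
  have hp0 : (0:ℝ) < p := by linarith
  have hq0 : (0:ℝ) < q := by linarith
  have hqp : (0:ℝ) < q - p := by linarith
  have hp1 : (0:ℝ) < p - 1 := by linarith
  have hq1 : (0:ℝ) < q - 1 := by linarith
  set α : ℝ := (n : ℝ) * q / p - n with hα_def
  set c : ℝ := p / (q - p) with hc_def
  set x1 : ℝ := q / (q - p) with hx1_def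
  set y1 : ℝ := q * (p - 1) / (q - p) with hy1_def
  set y2 : ℝ := p * (q - 1) / (q - p) with hy2_def
  have hα : 0 < α := by
    rw [hα_def, sub_pos, lt_div_iff₀ hp0]
    have : (0:ℝ) < (n:ℝ) := by linarith
    nlinarith
  have hc : 0 < c := div_pos hp0 hqp
  have hx1 : 0 < x1 := div_pos hq0 hqp
  have hy1 : 0 < y1 := div_pos (by positivity) hqp
  have hy2 : 0 < y2 := div_pos (by positivity) hqp
  have hαc : α * c = n := by rw [hα_def, hc_def]; field_simp
  have hnα : (n:ℝ) * α⁻¹ = c := by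
    field_simp
    linarith [hαc]
  -- the second Beta argument in the statement
  have hbeta_arg : p * q / ((q / (q - 1)) * (q - p)) = y2 := by
    rw [hy2_def]; field_simp
  -- value of the right-hand integral
  have hR : (n:ℝ) * (∫ s in Ioi (0 : ℝ), g s ^ p * s ^ ((n : ℝ) - 1)) = c * betaFn c y2 := by
    have hcong : ∫ s in Ioi (0 : ℝ), g s ^ p * s ^ ((n : ℝ) - 1)
        = ∫ s in Ioi (0:ℝ), s ^ (α * c - 1) * (1 + s ^ α) ^ (-(c + y2)) := by
      refine setIntegral_congr_fun measurableSet_Ioi fun s hs => ?_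
      have hs0 : (0:ℝ) < s := hs
      have hA : (0:ℝ) < 1 + s ^ α := by positivity
      rw [hg s, ← rpow_mul hA.le, mul_comm]
      congr 2
      · exact hαc.symm ▸ rfl
      · simp only [hx1_def, hc_def, hy2_def]
        field_simp
        ring
    have hsub : ∫ s in Ioi (0:ℝ), s ^ (α * c - 1) * (1 + s ^ α) ^ (-(c + y2))
        = α⁻¹ * ∫ u in Ioi (0:ℝ), u ^ (c - 1) * (1 + u) ^ (-(c + y2)) :=
      rpow_subst _ _ hα
    rw [hcong, hsub, intIoi_eq_betaFn, ← mul_assoc, hnα]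
  -- value of the left-hand integral
  have hL : (n:ℝ) * (∫ s in Ioi (0 : ℝ),
        ((n : ℝ) * ∫ r in Ioo (0 : ℝ) s, g r * r ^ ((n : ℝ) - 1)) ^ q *
          s ^ (-(n : ℝ) * q * (1 - 1 / p) - 1)) = c * betaFn x1 y1 := by
    have hcong : ∫ s in Ioi (0 : ℝ),
          ((n : ℝ) * ∫ r in Ioo (0 : ℝ) s, g r * r ^ ((n : ℝ) - 1)) ^ q *
            s ^ (-(n : ℝ) * q * (1 - 1 / p) - 1)
        = ∫ s in Ioi (0:ℝ), s ^ (α * x1 - 1) * (1 + s ^ α) ^ (-(x1 + y1)) := by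
      refine setIntegral_congr_fun measurableSet_Ioi fun s hs => ?_
      have hs0 : (0:ℝ) < s := hs
      have hA : (0:ℝ) < 1 + s ^ α := by positivity
      rw [inner_int n hn p q hp hpq g hg hs0,
        mul_rpow (rpow_nonneg hs0.le _) (rpow_nonneg hA.le _),
        ← rpow_mul hs0.le, ← rpow_mul hA.le, mul_right_comm, ← rpow_add hs0]
      congr 2
      · simp only [hα_def, hx1_def]; field_simp; ring
      · simp only [hc_def, hx1_def, hy1_def]; field_simp; ring
    have hsub : ∫ s in Ioi (0:ℝ), s ^ (α * x1 - 1) * (1 + s ^ α) ^ (-(x1 + y1))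
        = α⁻¹ * ∫ u in Ioi (0:ℝ), u ^ (x1 - 1) * (1 + u) ^ (-(x1 + y1)) :=
      rpow_subst _ _ hα
    rw [hcong, hsub, intIoi_eq_betaFn, ← mul_assoc, hnα]
  -- Beta identity
  have hB1 : betaFn x1 y1 = ((p / (p - 1)) / q) * betaFn c y2 := by
    rw [betaFn_eq_gamma hx1 hy1, betaFn_eq_gamma hc hy2]
    have h1 : x1 = c + 1 := by rw [hx1_def, hc_def]; field_simp; ring
    have h2 : y2 = y1 + 1 := by rw [hy2_def, hy1_def]; field_simp; ring
    rw [h1, Real.Gamma_add_one hc.ne', h2, Real.Gamma_add_one hy1.ne',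
      show c + 1 + y1 = c + (y1 + 1) by ring]
    have hG : Real.Gamma (c + (y1 + 1)) ≠ 0 :=
      (Real.Gamma_pos_of_pos (by positivity)).ne'
    have hcy : c * q * (p - 1) = p * y1 := by
      rw [hc_def, hy1_def]; field_simp
    field_simp
    linear_combination (Real.Gamma c * Real.Gamma y1 / Real.Gamma (c + (y1 + 1))) * hcy
  -- final algebra
  rw [hbeta_arg, hR, hL, hB1]
  have hK : 0 < c * betaFn c y2 := mul_pos hc (betaFn_pos hc hy2)
  have hC : (0:ℝ) < (p / (p - 1)) / q := by positivity
  rw [mul_left_comm c ((p / (p - 1)) / q), mul_rpow hC.le hK.le, mul_assoc,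
    ← rpow_add hK, show 1/q - 1/p + 1/p = (1:ℝ)/q by ring]
end
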